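/- arXiv:1903.05158 — 6 statements merged into one kernel-verified Lean document; each statement's English description precedes it below -/
import Mathlib

section
/- Let K : (0,∞) → (0,∞) be of class C². If K̄(x, y) > K̄(x, y⋆) for every x, y ∈ 𝒪, then τ ↦ K(√τ) is strictly convex on (0,∞), in the sense that K(√τ₁) + K(√τ₂) > 2 K(√((τ₁+τ₂)/2)) for all τ₁, τ₂ ∈ (0,∞) with τ₁ ≠ τ₂. -/
open MeasureTheory
open scoped ENNReal NNReal Classical

noncomputable section

/-- `ℝ^m` with the Euclidean norm. -/
abbrev E (m : ℕ) := EuclideanSpace ℝ (Fin m)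

/-- `ℝ^{2m} = ℝ^m × ℝ^m`, written as pairs `x = (x', x'')`. -/
abbrev V (m : ℕ) := E m × E m

/-- The Euclidean norm of `x ∈ ℝ^{2m}`. -/
def nrm {m : ℕ} (x : V m) : ℝ := Real.sqrt (‖x.1‖ ^ 2 + ‖x.2‖ ^ 2)

/-- The Euclidean distance on `ℝ^{2m}`. -/
def distE {m : ℕ} (x y : V m) : ℝ := nrm (x - y)

/-- The set `𝒪 = {x : |x'| > |x''|}`. -/
def OO (m : ℕ) : Set (V m) := {x | ‖x.2‖ < ‖x.1‖}

/-- The set `ℐ = {x : |x'| < |x''|}`. -/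
def II (m : ℕ) : Set (V m) := {x | ‖x.1‖ < ‖x.2‖}

/-- The Simons cone `𝒞 = {x : |x'| = |x''|}`. -/
def simonsCone (m : ℕ) : Set (V m) := {x | ‖x.1‖ = ‖x.2‖}

/-- The involution `x = (x', x'') ↦ x⋆ = (x'', x')`. -/
def pstar {m : ℕ} (x : V m) : V m := (x.2, x.1)

/-- The group `O(m)² = O(m) × O(m)`. -/
abbrev G (m : ℕ) := Matrix.orthogonalGroup (Fin m) ℝ × Matrix.orthogonalGroup (Fin m) ℝ

/-- The action of `O(m)²` on `ℝ^m × ℝ^m`: `Rx = (R₁ x', R₂ x'')`. -/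
def act {m : ℕ} (R : G m) (x : V m) : V m :=
  (Matrix.toEuclideanLin (R.1 : Matrix (Fin m) (Fin m) ℝ) x.1,
   Matrix.toEuclideanLin (R.2 : Matrix (Fin m) (Fin m) ℝ) x.2)

/-- The averaged kernel `K̄(x,y) = ∫_{O(m)²} K(|Rx − y|) dR ∈ [0,+∞]`,
where `dR` is the (normalized Haar probability) measure `μ` on `O(m)²`. -/
def Kbar {m : ℕ} [MeasurableSpace (G m)] (μ : Measure (G m)) (K : ℝ → ℝ) (x y : V m) : ℝ≥0∞ :=
  ∫⁻ R, ENNReal.ofReal (K (distE (act R x) y)) ∂μ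

/-- A doubly radial function: `w(Rx) = w(x)` for all `R ∈ O(m)²`. -/
def DoublyRadial {m : ℕ} (w : V m → ℝ) : Prop := ∀ (R : G m) (x : V m), w (act R x) = w x

namespace Aux2

variable {m : ℕ}

lemma L_single (A : Matrix (Fin m) (Fin m) ℝ) (i0 j : Fin m) :
    (Matrix.toEuclideanLin A (EuclideanSpace.single i0 (1:ℝ))) j = A j i0 := by
  have h : (WithLp.equiv 2 (Fin m → ℝ)) (EuclideanSpace.single i0 (1:ℝ)) = Pi.single i0 1 :=
    rfl
  rw [Matrix.toEuclideanLin_apply]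
  show (A.mulVec ((WithLp.equiv 2 (Fin m → ℝ)) (EuclideanSpace.single i0 (1:ℝ)))) j = A j i0
  rw [h, Matrix.mulVec_single_one, Matrix.col_apply]

lemma sumsq_col (A : Matrix (Fin m) (Fin m) ℝ) (hA : A ∈ Matrix.orthogonalGroup (Fin m) ℝ)
    (i0 : Fin m) : ∑ j, A j i0 ^ 2 = 1 := by
  rw [Matrix.mem_orthogonalGroup_iff'] at hA
  have := congrFun (congrFun hA i0) i0
  simp [Matrix.mul_apply, Matrix.one_apply, sq] at this ⊢
  simpa [mul_comm] using this

lemma sumsq_row (A : Matrix (Fin m) (Fin m) ℝ) (hA : A ∈ Matrix.orthogonalGroup (Fin m) ℝ)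
    (i0 : Fin m) : ∑ j, A i0 j ^ 2 = 1 := by
  rw [Matrix.mem_orthogonalGroup_iff] at hA
  have := congrFun (congrFun hA i0) i0
  simp [Matrix.mul_apply, Matrix.one_apply, sq] at this ⊢
  exact this

lemma norm_L_single (A : Matrix (Fin m) (Fin m) ℝ) (hA : A ∈ Matrix.orthogonalGroup (Fin m) ℝ)
    (i0 : Fin m) : ‖Matrix.toEuclideanLin A (EuclideanSpace.single i0 (1:ℝ))‖ = 1 := by
  rw [EuclideanSpace.norm_eq]
  have h : ∀ j, ‖(Matrix.toEuclideanLin A (EuclideanSpace.single i0 (1:ℝ))) j‖ ^2 = A j i0 ^2 := by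
    intro j; rw [L_single, Real.norm_eq_abs, sq_abs]
  rw [Finset.sum_congr rfl (fun j _ => h j), sumsq_col A hA i0, Real.sqrt_one]

lemma inner_L_single (A : Matrix (Fin m) (Fin m) ℝ) (i0 : Fin m) :
    (inner ℝ (Matrix.toEuclideanLin A (EuclideanSpace.single i0 (1:ℝ)))
      (EuclideanSpace.single i0 (1:ℝ)) : ℝ) = A i0 i0 := by
  rw [EuclideanSpace.inner_single_right]
  simp [L_single]

def uu (i0 : Fin m) (R : G m) : ℝ := (R.1 : Matrix (Fin m) (Fin m) ℝ) i0 i0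

lemma uu_cont (i0 : Fin m) : Continuous (uu i0 : G m → ℝ) := by
  have h1 : Continuous (fun A : Matrix (Fin m) (Fin m) ℝ => A i0 i0) :=
    (continuous_apply i0).comp (continuous_apply i0)
  exact h1.comp (continuous_subtype_val.comp continuous_fst)

lemma uu_abs_le (i0 : Fin m) (R : G m) : |uu i0 R| ≤ 1 := by
  rw [← sq_le_one_iff_abs_le_one]
  calc (uu i0 R)^2 ≤ ∑ j, ((R.1 : Matrix (Fin m) (Fin m) ℝ) i0 j) ^ 2 :=
        Finset.single_le_sum (f := fun j => ((R.1 : Matrix (Fin m) (Fin m) ℝ) i0 j)^2)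
          (fun j _ => sq_nonneg _) (Finset.mem_univ i0)
    _ = 1 := sumsq_row _ R.1.2 i0

def sigmaRefl (i0 : Fin m) : G m :=
  (⟨Matrix.diagonal (fun j => if j = i0 then (-1:ℝ) else 1), by
      rw [Matrix.mem_orthogonalGroup_iff,
        Matrix.diagonal_transpose, Matrix.diagonal_mul_diagonal]
      ext i j
      by_cases hij : i = j
      · subst hij
        by_cases h : i = i0 <;>
          simp [Matrix.diagonal_apply_eq, Matrix.one_apply, h]
      · simp [Matrix.diagonal_apply_ne _ hij, Matrix.one_apply, hij]⟩, 1)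

lemma uu_sigma (i0 : Fin m) (R : G m) : uu i0 (sigmaRefl i0 * R) = - uu i0 R := by
  show ((sigmaRefl i0 * R).1 : Matrix (Fin m) (Fin m) ℝ) i0 i0 = _
  have h : ((sigmaRefl i0 * R).1 : Matrix (Fin m) (Fin m) ℝ)
      = (Matrix.diagonal (fun j => if j = i0 then (-1:ℝ) else 1))
        * (R.1 : Matrix (Fin m) (Fin m) ℝ) := rfl
  rw [h, Matrix.diagonal_mul]
  simp [uu]

variable [MeasurableSpace (G m)] [BorelSpace (G m)]
variable (μ : Measure (G m)) [IsProbabilityMeasure μ]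

lemma uu_integrable (i0 : Fin m) : Integrable (uu i0) μ :=
  ⟨((uu_cont i0).measurable).aestronglyMeasurable,
    HasFiniteIntegral.of_bounded (C := 1)
      (Filter.Eventually.of_forall fun R => by
        simpa [Real.norm_eq_abs] using uu_abs_le i0 R)⟩

lemma uu_integral_zero [μ.IsMulLeftInvariant] (i0 : Fin m) : ∫ R, uu i0 R ∂μ = 0 := by
  have h := integral_mul_left_eq_self (μ := μ) (uu i0) (sigmaRefl i0)
  simp_rw [uu_sigma, integral_neg] at h
  linarith

/-- The key claim: no line through the midpoint value dominates `K ∘ sqrt` on `[τ₁, τ₂]`. -/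
lemma claimM [μ.IsMulLeftInvariant]
    (hm : 1 ≤ m)
    (K : ℝ → ℝ) (hKpos : ∀ τ : ℝ, 0 < τ → 0 < K τ)
    (hker : ∀ x ∈ OO m, ∀ y ∈ OO m, Kbar μ K x (pstar y) < Kbar μ K x y)
    (τ₁ τ₂ : ℝ) (hτ₁ : 0 < τ₁) (h12 : τ₁ < τ₂) (k : ℝ)
    (hk : ∀ t ∈ Set.Icc τ₁ τ₂,
        K (Real.sqrt t) ≤ K (Real.sqrt ((τ₁ + τ₂) / 2)) + k * (t - (τ₁ + τ₂) / 2)) :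
    False := by
  classical
  set i0 : Fin m := ⟨0, hm⟩ with hi0
  set e1 : E m := EuclideanSpace.single i0 (1:ℝ) with he1
  set s1 := Real.sqrt τ₁ with hs1
  set s2 := Real.sqrt τ₂ with hs2
  have hs1pos : 0 < s1 := Real.sqrt_pos.mpr hτ₁
  have hs12 : s1 < s2 := Real.sqrt_lt_sqrt hτ₁.le h12
  set a := (s2 + s1) / 2 with ha
  set d := (s2 - s1) / 2 with hd
  have hapos : 0 < a := by positivity
  have hdpos : 0 < d := by simp only [hd]; linarith
  have hs1sq : s1 ^ 2 = τ₁ := Real.sq_sqrt hτ₁.le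
  have hs2sq : s2 ^ 2 = τ₂ := Real.sq_sqrt (hτ₁.trans h12).le
  have had : a ^ 2 + d ^ 2 = (τ₁ + τ₂) / 2 := by
    rw [← hs1sq, ← hs2sq, ha, hd]; ring
  have h2ad : 2 * a * d = (τ₂ - τ₁) / 2 := by
    rw [← hs1sq, ← hs2sq, ha, hd]; ring
  set x : V m := (a • e1, 0) with hxdef
  set y : V m := (d • e1, 0) with hydef
  have he1norm : ‖e1‖ = 1 := by
    rw [he1, EuclideanSpace.norm_single]; norm_num
  have hx : x ∈ OO m := by
    show ‖(0 : E m)‖ < ‖a • e1‖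
    rw [norm_zero, norm_smul, he1norm, Real.norm_eq_abs, abs_of_pos hapos, mul_one]
    exact hapos
  have hy : y ∈ OO m := by
    show ‖(0 : E m)‖ < ‖d • e1‖
    rw [norm_zero, norm_smul, he1norm, Real.norm_eq_abs, abs_of_pos hdpos, mul_one]
    exact hdpos
  -- the rotated point
  have hactx : ∀ R : G m, act R x
      = (a • (Matrix.toEuclideanLin (R.1 : Matrix (Fin m) (Fin m) ℝ) e1), 0) := by
    intro R
    simp [act, hxdef, _root_.map_smul, _root_.map_zero]
  have hnormL : ∀ R : G m,
      ‖Matrix.toEuclideanLin (R.1 : Matrix (Fin m) (Fin m) ℝ) e1‖ = 1 := fun R =>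
    norm_L_single _ R.1.2 i0
  have hinnerL : ∀ R : G m,
      (inner ℝ (Matrix.toEuclideanLin (R.1 : Matrix (Fin m) (Fin m) ℝ) e1) e1 : ℝ) = uu i0 R :=
    fun R => inner_L_single _ i0
  -- distance to pstar y is constant
  have hdist1 : ∀ R : G m, distE (act R x) (pstar y) = Real.sqrt ((τ₁ + τ₂) / 2) := by
    intro R
    rw [← had]
    rw [distE, hactx R]
    show nrm (a • (Matrix.toEuclideanLin (R.1 : Matrix (Fin m) (Fin m) ℝ) e1) - 0,
      0 - d • e1) = _
    rw [nrm]
    congr 1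
    simp only [sub_zero, zero_sub, norm_neg, norm_smul, Real.norm_eq_abs,
      abs_of_pos hapos, abs_of_pos hdpos, hnormL R, he1norm, mul_one]
  -- distance to y
  have hdist2 : ∀ R : G m,
      distE (act R x) y = Real.sqrt ((τ₁ + τ₂) / 2 - 2 * a * d * uu i0 R) := by
    intro R
    set L := Matrix.toEuclideanLin (R.1 : Matrix (Fin m) (Fin m) ℝ) e1 with hL
    have hv2 : ‖a • L - d • e1‖ ^ 2 = (τ₁ + τ₂) / 2 - 2 * a * d * uu i0 R := by
      rw [norm_sub_sq_real, real_inner_smul_left, real_inner_smul_right,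
        norm_smul, norm_smul, Real.norm_eq_abs, Real.norm_eq_abs,
        abs_of_pos hapos, abs_of_pos hdpos, hnormL R, he1norm, hinnerL R, ← had]
      ring
    rw [distE, hactx R]
    show nrm (a • L - d • e1, 0 - 0) = _
    rw [nrm]
    simp only [sub_zero, sub_self, norm_zero]
    rw [← hv2]
    rw [zero_pow (by norm_num), add_zero, Real.sqrt_sq (norm_nonneg _)]
  -- positivity of arguments
  have htmem : ∀ R : G m, (τ₁ + τ₂) / 2 - 2 * a * d * uu i0 R ∈ Set.Icc τ₁ τ₂ := by
    intro R
    have h1 := (abs_le.mp (uu_abs_le i0 R)).1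
    have h2 := (abs_le.mp (uu_abs_le i0 R)).2
    have h2ad' : 0 < 2 * a * d := by positivity
    constructor <;> nlinarith
  -- the two Kbar values
  have hKbar1 : Kbar μ K x (pstar y) = ENNReal.ofReal (K (Real.sqrt ((τ₁ + τ₂) / 2))) := by
    rw [Kbar]
    simp_rw [hdist1]
    simp [lintegral_const, measure_univ]
  set c := K (Real.sqrt ((τ₁ + τ₂) / 2)) with hc
  set b := k * (2 * a * d) with hb
  have hf_int : Integrable (fun R : G m => c - b * uu i0 R) μ :=
    (integrable_const c).sub ((uu_integrable μ i0).const_mul b)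
  have hf_nonneg : ∀ R : G m, 0 ≤ c - b * uu i0 R := by
    intro R
    have hKt := hKpos (Real.sqrt ((τ₁ + τ₂) / 2 - 2 * a * d * uu i0 R))
      (Real.sqrt_pos.mpr (lt_of_lt_of_le hτ₁ (htmem R).1))
    have hle := hk _ (htmem R)
    calc (0:ℝ) ≤ K (Real.sqrt ((τ₁ + τ₂) / 2 - 2 * a * d * uu i0 R)) := hKt.le
      _ ≤ c + k * (((τ₁ + τ₂) / 2 - 2 * a * d * uu i0 R) - (τ₁ + τ₂) / 2) := hle
      _ = c - b * uu i0 R := by rw [hb]; ring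
  have hKbar2 : Kbar μ K x y ≤ ENNReal.ofReal c := by
    rw [Kbar]
    have hmono : ∀ R : G m, ENNReal.ofReal (K (distE (act R x) y))
        ≤ ENNReal.ofReal (c - b * uu i0 R) := by
      intro R
      apply ENNReal.ofReal_le_ofReal
      rw [hdist2 R]
      calc K (Real.sqrt ((τ₁ + τ₂) / 2 - 2 * a * d * uu i0 R))
          ≤ c + k * (((τ₁ + τ₂) / 2 - 2 * a * d * uu i0 R) - (τ₁ + τ₂) / 2) :=
            hk _ (htmem R)
        _ = c - b * uu i0 R := by rw [hb]; ring
    calc ∫⁻ R, ENNReal.ofReal (K (distE (act R x) y)) ∂μ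
        ≤ ∫⁻ R, ENNReal.ofReal (c - b * uu i0 R) ∂μ := lintegral_mono hmono
      _ = ENNReal.ofReal (∫ R, (c - b * uu i0 R) ∂μ) :=
          (ofReal_integral_eq_lintegral_ofReal hf_int
            (Filter.Eventually.of_forall hf_nonneg)).symm
      _ = ENNReal.ofReal c := by
          rw [integral_sub (integrable_const c) ((uu_integrable μ i0).const_mul b),
            integral_const, integral_const_mul, uu_integral_zero μ i0]
          simp [measure_univ]
  exact absurd (hker x hx y hy) (by rw [hKbar1]; exact not_lt.mpr hKbar2)

end Aux2

/-- If `K` is `C²` on `(0,∞)` and `K̄(x,y) > K̄(x,y⋆)` for every `x, y ∈ 𝒪`, then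
`τ ↦ K(√τ)` is strictly convex on `(0,∞)`. -/


theorem statement_2 (m : ℕ) (hm : 1 ≤ m)
    [MeasurableSpace (G m)] [BorelSpace (G m)]
    (μ : Measure (G m)) [IsProbabilityMeasure μ]
    [μ.IsMulLeftInvariant] [μ.IsMulRightInvariant]
    (K : ℝ → ℝ) (hKpos : ∀ τ : ℝ, 0 < τ → 0 < K τ)
    (hKC2 : ContDiffOn ℝ 2 K (Set.Ioi (0 : ℝ)))
    (hker : ∀ x ∈ OO m, ∀ y ∈ OO m, Kbar μ K x (pstar y) < Kbar μ K x y) :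
    ∀ τ₁ τ₂ : ℝ, 0 < τ₁ → 0 < τ₂ → τ₁ ≠ τ₂ →
      2 * K (Real.sqrt ((τ₁ + τ₂) / 2)) < K (Real.sqrt τ₁) + K (Real.sqrt τ₂) := by
  have main : ∀ τ₁ τ₂ : ℝ, 0 < τ₁ → τ₁ < τ₂ →
      2 * K (Real.sqrt ((τ₁ + τ₂) / 2)) < K (Real.sqrt τ₁) + K (Real.sqrt τ₂) := by
    intro τ₁ τ₂ hτ₁ h12
    by_contra hcon
    push_neg at hcon
    set g : ℝ → ℝ := fun t => K (Real.sqrt t) with hg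
    have hgc : ContinuousOn g (Set.Icc τ₁ τ₂) := by
      have h1 : ContinuousOn g (Set.Ioi 0) := by
        apply ContinuousOn.comp (hKC2.continuousOn) Real.continuous_sqrt.continuousOn
        intro t ht
        exact Real.sqrt_pos.mpr ht
      exact h1.mono (fun t ht => lt_of_lt_of_le hτ₁ ht.1)
    set k0 : ℝ := (g τ₂ - g τ₁) / (τ₂ - τ₁) with hk0def
    have hk0 : k0 * (τ₂ - τ₁) = g τ₂ - g τ₁ :=
      div_mul_cancel₀ _ (by linarith : τ₂ - τ₁ ≠ 0)
    set φ : ℝ → ℝ := fun t => g t - (g τ₁ + k0 * (t - τ₁)) with hφ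
    have hφc : ContinuousOn φ (Set.Icc τ₁ τ₂) :=
      hgc.sub (continuousOn_const.add (continuousOn_const.mul
        (continuousOn_id.sub continuousOn_const)))
    obtain ⟨ξ, hξmem, hξmax⟩ := isCompact_Icc.exists_isMaxOn
      (Set.nonempty_Icc.mpr h12.le) hφc
    have hξmax' : ∀ t ∈ Set.Icc τ₁ τ₂, φ t ≤ φ ξ := hξmax
    have hφ1 : φ τ₁ = 0 := by simp [hφ]
    have hφ2 : φ τ₂ = 0 := by
      show g τ₂ - (g τ₁ + k0 * (τ₂ - τ₁)) = 0
      rw [hk0]; ring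
    have hmid_mem : (τ₁ + τ₂) / 2 ∈ Set.Icc τ₁ τ₂ := by
      constructor <;> [linarith; linarith]
    have hφmid : 0 ≤ φ ((τ₁ + τ₂) / 2) := by
      show 0 ≤ g ((τ₁ + τ₂) / 2) - (g τ₁ + k0 * ((τ₁ + τ₂) / 2 - τ₁))
      have h1 : k0 * ((τ₁ + τ₂) / 2 - τ₁) = (g τ₂ - g τ₁) / 2 := by
        have : k0 * ((τ₁ + τ₂) / 2 - τ₁) = k0 * (τ₂ - τ₁) / 2 := by ring
        rw [this, hk0]
      rw [h1]
      have : 2 * g ((τ₁ + τ₂) / 2) ≥ g τ₁ + g τ₂ := hcon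
      linarith
    obtain ⟨ξ', hξ'mem, hξ'max⟩ : ∃ ξ', ξ' ∈ Set.Ioo τ₁ τ₂ ∧
        ∀ t ∈ Set.Icc τ₁ τ₂, φ t ≤ φ ξ' := by
      by_cases hξi : ξ ∈ Set.Ioo τ₁ τ₂
      · exact ⟨ξ, hξi, hξmax'⟩
      · have hξ0 : φ ξ = 0 := by
          rcases hξmem with ⟨hl, hr⟩
          rcases eq_or_lt_of_le hl with h | h
          · rw [← h]; exact hφ1
          rcases eq_or_lt_of_le hr with h' | h'
          · rw [h']; exact hφ2
          · exact absurd ⟨h, h'⟩ hξi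
        refine ⟨(τ₁ + τ₂) / 2, ⟨by linarith, by linarith⟩, fun t ht => ?_⟩
        calc φ t ≤ φ ξ := hξmax' t ht
          _ = 0 := hξ0
          _ ≤ φ ((τ₁ + τ₂) / 2) := hφmid
    set r : ℝ := min (ξ' - τ₁) (τ₂ - ξ') with hr
    have hrpos : 0 < r := lt_min (by linarith [hξ'mem.1]) (by linarith [hξ'mem.2])
    have hr1 : τ₁ ≤ ξ' - r := by
      have := min_le_left (ξ' - τ₁) (τ₂ - ξ'); simp only [← hr] at this; linarith
    have hr2 : ξ' + r ≤ τ₂ := by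
      have := min_le_right (ξ' - τ₁) (τ₂ - ξ'); simp only [← hr] at this; linarith
    refine Aux2.claimM μ hm K hKpos hker (ξ' - r) (ξ' + r)
      (by linarith) (by linarith) k0 ?_
    intro t ht
    have hmid : ((ξ' - r) + (ξ' + r)) / 2 = ξ' := by ring
    rw [hmid]
    have htmem : t ∈ Set.Icc τ₁ τ₂ := ⟨le_trans hr1 ht.1, le_trans ht.2 hr2⟩
    have h1 : φ t ≤ φ ξ' := hξ'max t htmem
    have h2 : g t - (g τ₁ + k0 * (t - τ₁)) ≤ g ξ' - (g τ₁ + k0 * (ξ' - τ₁)) := h1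
    show g t ≤ g ξ' + k0 * (t - ξ')
    linarith
  intro τ₁ τ₂ h1 h2 hne
  rcases hne.lt_or_gt with h12 | h12
  · exact main τ₁ τ₂ h1 h12
  · have := main τ₂ τ₁ h2 h12
    rw [add_comm τ₂ τ₁] at this
    linarith
end
end

section
/- Expression of the operator on odd functions. Let K : (0,∞) → (0,∞) be measurable and let w : ℝ^{2m} → ℝ be doubly radial and odd with respect to the Simons cone. Let x ∈ 𝒪 be such that ∫_{ℝ^{2m}} |w(x) − w(y)| K̄(x, y) dy < ∞ and ∫_𝒪 K̄(x, y⋆) dy < ∞. Then ∫_{ℝ^{2m}} (w(x) − w(y)) K̄(x, y) dy = ∫_𝒪 (w(x) − w(y)) K̄(x, y) dy + ∫_𝒪 (w(x) + w(y)) K̄(x, y⋆) dy = ∫_𝒪 (w(x) − w(y)) (K̄(x, y) − K̄(x, y⋆)) dy + 2 w(x) ∫_𝒪 K̄(x, y⋆) dy. -/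
open MeasureTheory
open scoped ENNReal NNReal Classical

noncomputable section

set_option maxHeartbeats 2000000
set_option synthInstance.maxHeartbeats 1000000

section Aux

variable {m : ℕ}

lemma cont_nrm : Continuous (nrm (m := m)) := by
  unfold nrm; fun_prop

lemma cont_act (x : V m) : Continuous fun R : G m => act R x := by
  have h1 : Continuous fun R : G m => (R.1 : Matrix (Fin m) (Fin m) ℝ) :=
    continuous_subtype_val.comp continuous_fst
  have h2 : Continuous fun R : G m => (R.2 : Matrix (Fin m) (Fin m) ℝ) :=
    continuous_subtype_val.comp continuous_snd
  have key : ∀ v : E m, Continuous fun M : Matrix (Fin m) (Fin m) ℝ =>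
      Matrix.toEuclideanLin M v := by
    intro v
    have : (fun M : Matrix (Fin m) (Fin m) ℝ => Matrix.toEuclideanLin M v) =
        ((LinearMap.applyₗ v).comp Matrix.toEuclideanLin.toLinearMap : _ →ₗ[ℝ] _) := rfl
    rw [this]
    exact LinearMap.continuous_of_finiteDimensional _
  exact ((key x.1).comp h1).prodMk ((key x.2).comp h2)

lemma meas_Kbar [MeasurableSpace (G m)] [BorelSpace (G m)]
    (μ : Measure (G m)) [SFinite μ] (K : ℝ → ℝ) (hK : Measurable K)
    (x : V m) : Measurable fun y => Kbar μ K x y := by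
  have hF : Measurable fun p : V m × G m => ENNReal.ofReal (K (distE (act p.2 x) p.1)) := by
    have hc : Continuous fun p : V m × G m => distE (act p.2 x) p.1 := by
      have : Continuous fun p : V m × G m => act p.2 x - p.1 :=
        ((cont_act x).comp continuous_snd).sub continuous_fst
      exact cont_nrm.comp this
    exact ENNReal.measurable_ofReal.comp (hK.comp hc.measurable)
  exact Measurable.lintegral_prod_right' hF

lemma pstar_measurable : Measurable (pstar (m := m)) := measurable_swap

lemma mp_pstar : MeasurePreserving (pstar (m := m)) volume volume := by
  have h := Measure.measurePreserving_swap (μ := (volume : Measure (E m))) (ν := (volume : Measure (E m)))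
  rw [← Measure.volume_eq_prod] at h
  exact h

lemma emb_pstar : MeasurableEmbedding (pstar (m := m)) :=
  (MeasurableEquiv.prodComm (α := E m) (β := E m)).measurableEmbedding

lemma pstar_preimage_II : pstar ⁻¹' II m = OO m := by
  ext y; simp [pstar, II, OO]

lemma meas_OO : MeasurableSet (OO m) :=
  measurableSet_lt (continuous_norm.comp continuous_snd).measurable
    (continuous_norm.comp continuous_fst).measurable

lemma meas_II : MeasurableSet (II m) :=
  measurableSet_lt (continuous_norm.comp continuous_fst).measurable
    (continuous_norm.comp continuous_snd).measurable

lemma cone_null (hm : 1 ≤ m) : (volume : Measure (V m)) (simonsCone m) = 0 := by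
  haveI : Nonempty (Fin m) := ⟨⟨0, hm⟩⟩
  haveI : Nontrivial (E m) := inferInstance
  have hmeas : MeasurableSet (simonsCone m) :=
    measurableSet_eq_fun (continuous_norm.comp continuous_fst).measurable
      (continuous_norm.comp continuous_snd).measurable
  rw [Measure.volume_eq_prod _ _, Measure.prod_apply hmeas]
  have : ∀ a : E m, (volume : Measure (E m)) (Prod.mk a ⁻¹' simonsCone m) = 0 := by
    intro a
    have hset : Prod.mk a ⁻¹' simonsCone m = Metric.sphere (0 : E m) ‖a‖ := by
      ext b
      simp [simonsCone, Metric.mem_sphere, dist_zero_right, eq_comm]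
    rw [hset]
    exact Measure.addHaar_sphere volume 0 ‖a‖
  simp [this]

lemma compl_union_eq_cone : (OO m ∪ II m)ᶜ = simonsCone m := by
  ext y
  simp only [Set.mem_compl_iff, Set.mem_union, OO, II, simonsCone, Set.mem_setOf_eq]
  constructor
  · intro h
    push_neg at h
    exact le_antisymm h.1 h.2
  · intro h
    simp [h, lt_irrefl]

lemma enorm_aux (a : ℝ) (b : ℝ≥0∞) :
    ENNReal.ofReal ‖a * b.toReal‖ ≤ ENNReal.ofReal |a| * b := by
  rw [Real.norm_eq_abs, abs_mul, abs_of_nonneg ENNReal.toReal_nonneg,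
    ENNReal.ofReal_mul (abs_nonneg a)]
  exact mul_le_mul_right ENNReal.ofReal_toReal_le _

lemma integrable_aux {α : Type*} [MeasurableSpace α] {ν : Measure α} {a : α → ℝ} {b : α → ℝ≥0∞}
    (ha : Measurable a) (hb : Measurable b)
    (h : (∫⁻ y, ENNReal.ofReal |a y| * b y ∂ν) < ⊤) :
    Integrable (fun y => a y * (b y).toReal) ν := by
  refine ⟨(ha.mul hb.ennreal_toReal).aestronglyMeasurable, ?_⟩
  rw [hasFiniteIntegral_iff_norm]
  exact lt_of_le_of_lt (lintegral_mono fun y => enorm_aux (a y) (b y)) h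

end Aux

/-- Expression of the operator `L_K` on doubly radial odd functions: the integral over
`ℝ^{2m}` can be written as integrals over `𝒪` only. -/
theorem statement_7 (m : ℕ) (hm : 1 ≤ m)
    [MeasurableSpace (G m)] [BorelSpace (G m)]
    (μ : Measure (G m)) [IsProbabilityMeasure μ]
    [μ.IsMulLeftInvariant] [μ.IsMulRightInvariant]
    (K : ℝ → ℝ) (hKmeas : Measurable K) (hKpos : ∀ τ : ℝ, 0 < τ → 0 < K τ)
    (w : V m → ℝ) (hwmeas : Measurable w) (hdr : DoublyRadial w)
    (hodd : ∀ x, w (pstar x) = - w x)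
    (x : V m) (hx : x ∈ OO m)
    (hfin1 : (∫⁻ y, ENNReal.ofReal |w x - w y| * Kbar μ K x y) < ⊤)
    (hfin2 : (∫⁻ y in OO m, Kbar μ K x (pstar y)) < ⊤) :
    (∫ y, (w x - w y) * (Kbar μ K x y).toReal) =
      (∫ y in OO m, (w x - w y) * (Kbar μ K x y).toReal)
        + (∫ y in OO m, (w x + w y) * (Kbar μ K x (pstar y)).toReal) ∧
    (∫ y, (w x - w y) * (Kbar μ K x y).toReal) =
      (∫ y in OO m, (w x - w y)
          * ((Kbar μ K x y).toReal - (Kbar μ K x (pstar y)).toReal))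
        + 2 * w x * (∫⁻ y in OO m, Kbar μ K x (pstar y)).toReal := by
  haveI : SFinite μ := inferInstance
  have hK1 : Measurable fun y => Kbar μ K x y := meas_Kbar μ K hKmeas x
  have hK2 : Measurable fun y => Kbar μ K x (pstar y) := hK1.comp pstar_measurable
  have ha1 : Measurable fun y => w x - w y := measurable_const.sub hwmeas
  have ha2 : Measurable fun y => w x + w y := measurable_const.add hwmeas
  -- integrability of f over the whole space
  have hInt_f : Integrable (fun y => (w x - w y) * (Kbar μ K x y).toReal) volume :=
    integrable_aux ha1 hK1 hfin1
  have hInt_f_OO : IntegrableOn (fun y => (w x - w y) * (Kbar μ K x y).toReal) (OO m) :=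
    hInt_f.integrableOn
  have hInt_f_II : IntegrableOn (fun y => (w x - w y) * (Kbar μ K x y).toReal) (II m) :=
    hInt_f.integrableOn
  -- lintegral bound for g₂
  have hg2fin : (∫⁻ y in OO m, ENNReal.ofReal |w x + w y| * Kbar μ K x (pstar y)) < ⊤ := by
    have hch := mp_pstar.setLIntegral_comp_preimage_emb emb_pstar
      (fun z => ENNReal.ofReal |w x - w z| * Kbar μ K x z) (II m)
    rw [pstar_preimage_II] at hch
    have heq : (∫⁻ y in OO m, ENNReal.ofReal |w x + w y| * Kbar μ K x (pstar y))
        = ∫⁻ y in OO m, ENNReal.ofReal |w x - w (pstar y)| * Kbar μ K x (pstar y) := by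
      refine lintegral_congr fun y => ?_
      rw [hodd y, sub_neg_eq_add]
    rw [heq, hch]
    exact lt_of_le_of_lt (setLIntegral_le_lintegral _ _) hfin1
  -- integrability of g₂, g₃, g on OO
  have hInt_g2 : IntegrableOn (fun y => (w x + w y) * (Kbar μ K x (pstar y)).toReal) (OO m) :=
    integrable_aux ha2 hK2 hg2fin
  have hInt_g3 : IntegrableOn (fun y => 2 * w x * (Kbar μ K x (pstar y)).toReal) (OO m) := by
    refine integrable_aux measurable_const hK2 ?_
    rw [lintegral_const_mul _ hK2]
    exact ENNReal.mul_lt_top ENNReal.ofReal_lt_top hfin2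
  have hInt_g : IntegrableOn (fun y => (w x - w y) * (Kbar μ K x (pstar y)).toReal) (OO m) := by
    have hfe : (fun y => (w x - w y) * (Kbar μ K x (pstar y)).toReal)
        = fun y => 2 * w x * (Kbar μ K x (pstar y)).toReal
          - (w x + w y) * (Kbar μ K x (pstar y)).toReal := by
      funext y; ring
    rw [hfe]
    exact hInt_g3.sub hInt_g2
  -- split the full integral
  have hsplit : (∫ y, (w x - w y) * (Kbar μ K x y).toReal)
      = (∫ y in OO m, (w x - w y) * (Kbar μ K x y).toReal)
        + ∫ y in II m, (w x - w y) * (Kbar μ K x y).toReal := by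
    have hnull : (volume : Measure (V m)) ((OO m ∪ II m)ᶜ) = 0 := by
      rw [compl_union_eq_cone]; exact cone_null hm
    have huniv : (Set.univ : Set (V m)) =ᵐ[volume] ((OO m ∪ II m : Set (V m)) : Set (V m)) :=
      (ae_eq_univ.2 hnull).symm
    calc (∫ y, (w x - w y) * (Kbar μ K x y).toReal)
        = ∫ y in Set.univ, (w x - w y) * (Kbar μ K x y).toReal := by
          rw [setIntegral_univ]
      _ = ∫ y in OO m ∪ II m, (w x - w y) * (Kbar μ K x y).toReal :=
          setIntegral_congr_set huniv
      _ = _ := by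
          refine setIntegral_union (Set.disjoint_left.mpr ?_) meas_II hInt_f_OO hInt_f_II
          intro y hyO hyI
          simp only [OO, II, Set.mem_setOf_eq] at hyO hyI
          exact lt_asymm hyO hyI
  -- change of variables on II
  have hchange : (∫ y in II m, (w x - w y) * (Kbar μ K x y).toReal)
      = ∫ y in OO m, (w x + w y) * (Kbar μ K x (pstar y)).toReal := by
    have h := mp_pstar.setIntegral_preimage_emb emb_pstar
      (fun z => (w x - w z) * (Kbar μ K x z).toReal) (II m)
    rw [pstar_preimage_II] at h
    rw [← h]
    refine setIntegral_congr_fun meas_OO fun y _ => ?_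
    rw [hodd y, sub_neg_eq_add]
  have eq1 : (∫ y, (w x - w y) * (Kbar μ K x y).toReal) =
      (∫ y in OO m, (w x - w y) * (Kbar μ K x y).toReal)
        + ∫ y in OO m, (w x + w y) * (Kbar μ K x (pstar y)).toReal := by
    rw [hsplit, hchange]
  refine ⟨eq1, ?_⟩
  -- second identity
  have hlin : (∫ y in OO m, (Kbar μ K x (pstar y)).toReal)
      = (∫⁻ y in OO m, Kbar μ K x (pstar y)).toReal := by
    refine integral_toReal hK2.aemeasurable ?_
    exact ae_lt_top hK2 hfin2.ne
  have eqDiff : (∫ y in OO m, (w x - w y)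
        * ((Kbar μ K x y).toReal - (Kbar μ K x (pstar y)).toReal))
      = (∫ y in OO m, (w x - w y) * (Kbar μ K x y).toReal)
        - ∫ y in OO m, (w x - w y) * (Kbar μ K x (pstar y)).toReal := by
    rw [← integral_sub hInt_f_OO hInt_g]
    refine setIntegral_congr_fun meas_OO fun y _ => ?_
    ring
  have eqCD : (∫ y in OO m, (w x + w y) * (Kbar μ K x (pstar y)).toReal)
      = (∫ y in OO m, 2 * w x * (Kbar μ K x (pstar y)).toReal)
        - ∫ y in OO m, (w x - w y) * (Kbar μ K x (pstar y)).toReal := by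
    rw [← integral_sub hInt_g3 hInt_g]
    refine setIntegral_congr_fun meas_OO fun y _ => ?_
    ring
  have eqD : (∫ y in OO m, 2 * w x * (Kbar μ K x (pstar y)).toReal)
      = 2 * w x * (∫⁻ y in OO m, Kbar μ K x (pstar y)).toReal := by
    rw [integral_const_mul, hlin]
  rw [eq1, eqDiff, eqCD, eqD]
  ring
end
end

section
/- Existence of a competitor. Let m ≥ 1 and S ≥ 2. Let u : ℝ^{2m} → ℝ be doubly radial, odd with respect to the Simons cone, with 0 ≤ u ≤ 1 on 𝒪, and Lipschitz on the closed ball B̄_{S+3} with Lipschitz constant μ > 0. Then there exist a constant C > 0 depending only on μ and a function w : cl(B_{S+2} ∩ 𝒪) → ℝ such that: (H1) −1 ≤ w ≤ 1; (H2) w is doubly radial and w = 0 on 𝒞 ∩ B̄_{S+2}; (H3) w = u on ∂B_{S+2} ∩ 𝒪; (H4) w ≡ −1 on B_S ∩ {x ∈ 𝒪 : μ dist(x, 𝒞) > 1}; (H5) w is Lipschitz on cl(B_{S+2} ∩ 𝒪) with Lipschitz constant depending only on μ, and |w(x) − w(y)| ≤ (C / dist(x, 𝒞)) |x − y| whenever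 x, y ∈ B_{S+1} ∩ 𝒪, μ dist(x, 𝒞) ≥ 1 and μ dist(y, 𝒞) ≤ 1. Here dist(x, 𝒞) = (|x'| − |x''|)/√2 for x ∈ 𝒪. -/
open MeasureTheory
open scoped ENNReal NNReal Classical

noncomputable section

/-- The open Euclidean ball of radius `R` centered at the origin in `ℝ^{2m}`. -/
def ballE (m : ℕ) (R : ℝ) : Set (V m) := {x | nrm x < R}

/-- The distance to the Simons cone, for points of `𝒪`: `dist(x, 𝒞) = (|x'| - |x''|)/√2`. -/
def distC {m : ℕ} (x : V m) : ℝ := (‖x.1‖ - ‖x.2‖) / Real.sqrt 2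

-- auxiliary lemmas
namespace SC

variable {m : ℕ}

lemma nrm_eq_norm (x : V m) : nrm x = ‖(WithLp.equiv 2 (E m × E m)).symm x‖ := by
  rw [WithLp.prod_norm_eq_of_L2]; rfl

lemma nrm_nonneg (x : V m) : 0 ≤ nrm x := Real.sqrt_nonneg _

lemma distE_nonneg (x y : V m) : 0 ≤ distE x y := nrm_nonneg _

lemma abs_nrm_sub_nrm (x y : V m) : |nrm x - nrm y| ≤ distE x y := by
  simp only [distE, nrm_eq_norm]
  exact abs_norm_sub_norm_le _ _

lemma distC_lip (x y : V m) : |distC x - distC y| ≤ distE x y := by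
  set a := ‖x.1 - y.1‖ with ha'
  set b := ‖x.2 - y.2‖ with hb'
  have ha : 0 ≤ a := norm_nonneg _
  have hb : 0 ≤ b := norm_nonneg _
  have hd : distE x y = Real.sqrt (a ^ 2 + b ^ 2) := rfl
  have hs2 : (0:ℝ) < Real.sqrt 2 := by positivity
  have hdd : a + b ≤ Real.sqrt 2 * Real.sqrt (a ^ 2 + b ^ 2) := by
    rw [← Real.sqrt_mul (by norm_num)]
    have h := Real.sqrt_le_sqrt (show (a + b) ^ 2 ≤ 2 * (a ^ 2 + b ^ 2) by nlinarith [sq_nonneg (a-b)])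
    rwa [Real.sqrt_sq (by positivity)] at h
  have h1 : |‖x.1‖ - ‖y.1‖| ≤ a := abs_norm_sub_norm_le _ _
  have h2 : |‖x.2‖ - ‖y.2‖| ≤ b := abs_norm_sub_norm_le _ _
  rw [distC, distC, div_sub_div_same, abs_div, abs_of_pos hs2, div_le_iff₀ hs2, hd]
  calc |‖x.1‖ - ‖x.2‖ - (‖y.1‖ - ‖y.2‖)|
      = |(‖x.1‖ - ‖y.1‖) + -(‖x.2‖ - ‖y.2‖)| := by ring_nf
    _ ≤ |‖x.1‖ - ‖y.1‖| + |‖x.2‖ - ‖y.2‖| := by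
        refine (abs_add_le _ _).trans ?_
        rw [abs_neg]
    _ ≤ a + b := add_le_add h1 h2
    _ ≤ Real.sqrt (a ^ 2 + b ^ 2) * Real.sqrt 2 := by rw [mul_comm]; exact hdd

lemma norm_toEuclideanLin {A : Matrix (Fin m) (Fin m) ℝ}
    (hA : A ∈ Matrix.orthogonalGroup (Fin m) ℝ) (v : E m) :
    ‖Matrix.toEuclideanLin A v‖ = ‖v‖ := by
  have h2 : star A * A = 1 := Matrix.mem_unitaryGroup_iff'.mp hA
  have hmul : Matrix.toEuclideanLin (star A * A) =
      (Matrix.toEuclideanLin (star A)).comp (Matrix.toEuclideanLin A) :=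
by
    rw [Matrix.toEuclideanLin_eq_toLin_orthonormal]
    exact Matrix.toLin_mul (EuclideanSpace.basisFun (Fin m) ℝ).toBasis
      (EuclideanSpace.basisFun (Fin m) ℝ).toBasis
      (EuclideanSpace.basisFun (Fin m) ℝ).toBasis (star A) A
  have hid : (LinearMap.adjoint (Matrix.toEuclideanLin A)).comp (Matrix.toEuclideanLin A)
      = LinearMap.id := by
    rw [← Matrix.toEuclideanLin_conjTranspose_eq_adjoint, ← Matrix.star_eq_conjTranspose,
      ← hmul, h2, Matrix.toEuclideanLin_eq_toLin_orthonormal]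
    exact Matrix.toLin_one (EuclideanSpace.basisFun (Fin m) ℝ).toBasis
  have key : (inner ℝ (Matrix.toEuclideanLin A v) (Matrix.toEuclideanLin A v) : ℝ)
      = inner ℝ v v := by
    rw [← LinearMap.adjoint_inner_left]
    have : LinearMap.adjoint (Matrix.toEuclideanLin A) (Matrix.toEuclideanLin A v) = v := by
      have := congrArg (fun f => f v) hid
      simpa using this
    rw [this]
  have h3 : ‖Matrix.toEuclideanLin A v‖ ^ 2 = ‖v‖ ^ 2 := by
    rw [← real_inner_self_eq_norm_sq, ← real_inner_self_eq_norm_sq, key]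
  have := congrArg Real.sqrt h3
  rwa [Real.sqrt_sq (norm_nonneg _), Real.sqrt_sq (norm_nonneg _)] at this

lemma exists_orthogonal (f : E m ≃ₗᵢ[ℝ] E m) :
    ∃ A : Matrix.orthogonalGroup (Fin m) ℝ,
      ∀ v, Matrix.toEuclideanLin (A : Matrix (Fin m) (Fin m) ℝ) v = f v := by
  set b := (EuclideanSpace.basisFun (Fin m) ℝ) with hb
  set L : E m →ₗ[ℝ] E m := f.toLinearEquiv.toLinearMap with hL
  set A := LinearMap.toMatrix b.toBasis b.toBasis L with hA
  have hadj : (LinearMap.adjoint L).comp L = LinearMap.id := by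
    apply LinearMap.ext; intro x
    apply ext_inner_right ℝ
    intro y
    simp only [LinearMap.comp_apply, LinearMap.adjoint_inner_left, LinearMap.id_apply]
    have : (inner ℝ (L x) (L y) : ℝ) = inner ℝ x y := f.inner_map_map x y
    · exact this
  have hmem : A ∈ Matrix.orthogonalGroup (Fin m) ℝ := by
    rw [Matrix.mem_unitaryGroup_iff']
    have hstar : star A = LinearMap.toMatrix b.toBasis b.toBasis (LinearMap.adjoint L) := by
      rw [Matrix.star_eq_conjTranspose, LinearMap.toMatrix_adjoint]
    rw [hstar, hA, ← LinearMap.toMatrix_comp b.toBasis b.toBasis b.toBasis, hadj,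
      LinearMap.toMatrix_id]
  refine ⟨⟨A, hmem⟩, fun v => ?_⟩
  have : Matrix.toEuclideanLin A = L := Matrix.toLin_toMatrix b.toBasis b.toBasis L
  rw [this]; rfl

lemma u_zero_on_cone (u : V m → ℝ) (hrad : DoublyRadial u)
    (hodd : ∀ x, u (pstar x) = - u x) {x : V m} (hx : ‖x.1‖ = ‖x.2‖) : u x = 0 := by
  set f := Submodule.reflection (ℝ ∙ (x.1 - x.2))ᗮ with hf
  have h1 : f x.1 = x.2 := Submodule.reflection_sub hx
  have h2 : f x.2 = x.1 := by
    rw [← h1]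
    exact Submodule.reflection_reflection _ x.1
  obtain ⟨A, hAf⟩ := exists_orthogonal f
  have hact : act (A, A) x = pstar x := by
    apply Prod.ext
    · show Matrix.toEuclideanLin (A : Matrix (Fin m) (Fin m) ℝ) x.1 = x.2
      rw [hAf]; exact h1
    · show Matrix.toEuclideanLin (A : Matrix (Fin m) (Fin m) ℝ) x.2 = x.1
      rw [hAf]; exact h2
  have := hrad (A, A) x
  rw [hact, hodd] at this
  linarith

lemma norm_act_fst (R : G m) (x : V m) : ‖(act R x).1‖ = ‖x.1‖ :=
  norm_toEuclideanLin R.1.2 x.1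

lemma norm_act_snd (R : G m) (x : V m) : ‖(act R x).2‖ = ‖x.2‖ :=
  norm_toEuclideanLin R.2.2 x.2

end SC

set_option maxHeartbeats 1000000 in
/-- Existence of a competitor `w` on `cl(B_{S+2} ∩ 𝒪)` satisfying (H1)–(H5),
with constants depending only on the Lipschitz constant `μ` of `u` on `B̄_{S+3}`. -/
theorem statement_15 (m : ℕ) (hm : 1 ≤ m) (μc : ℝ) (hμc : 0 < μc) :
    ∃ C : ℝ, 0 < C ∧
      ∀ S : ℝ, 2 ≤ S →
      ∀ u : V m → ℝ, DoublyRadial u → (∀ x, u (pstar x) = - u x) →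
        (∀ x ∈ OO m, 0 ≤ u x ∧ u x ≤ 1) →
        (∀ x y : V m, nrm x ≤ S + 3 → nrm y ≤ S + 3 → |u x - u y| ≤ μc * distE x y) →
      ∃ w : V m → ℝ,
        -- (H1)
        (∀ x ∈ closure (ballE m (S + 2) ∩ OO m), -1 ≤ w x ∧ w x ≤ 1) ∧
        -- (H2)
        (∀ (R : G m), ∀ x ∈ closure (ballE m (S + 2) ∩ OO m), w (act R x) = w x) ∧
        (∀ x ∈ simonsCone m, nrm x ≤ S + 2 → w x = 0) ∧
        -- (H3)
        (∀ x ∈ OO m, nrm x = S + 2 → w x = u x) ∧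
        -- (H4)
        (∀ x ∈ OO m, nrm x < S → 1 < μc * distC x → w x = -1) ∧
        -- (H5)
        (∀ x ∈ closure (ballE m (S + 2) ∩ OO m), ∀ y ∈ closure (ballE m (S + 2) ∩ OO m),
          |w x - w y| ≤ C * distE x y) ∧
        (∀ x y : V m, x ∈ OO m → y ∈ OO m → nrm x < S + 1 → nrm y < S + 1 →
          1 ≤ μc * distC x → μc * distC y ≤ 1 →
          |w x - w y| ≤ C / distC x * distE x y) := by
  refine ⟨2 * μc + 2, by linarith, ?_⟩
  intro S hS u hrad hodd hu01 hulip
  set η : V m → ℝ := fun x => max (min 1 (nrm x - (S + 1))) 0 with hη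
  set v : V m → ℝ := fun x => - min 1 (μc * max (distC x) 0) with hv
  set w : V m → ℝ := fun x => (1 - η x) * v x + η x * u x with hw
  -- closure facts
  have hclosed : IsClosed {x : V m | nrm x ≤ S + 2 ∧ ‖x.2‖ ≤ ‖x.1‖} := by
    have hc1 : Continuous (fun x : V m => nrm x) := by
      unfold nrm
      exact Real.continuous_sqrt.comp
        (((continuous_fst.norm.pow 2).add (continuous_snd.norm.pow 2)))
    exact (isClosed_le hc1 continuous_const).inter
      (isClosed_le continuous_snd.norm continuous_fst.norm)
  have hT : closure (ballE m (S + 2) ∩ OO m) ⊆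
      {x : V m | nrm x ≤ S + 2 ∧ ‖x.2‖ ≤ ‖x.1‖} := by
    apply closure_minimal _ hclosed
    rintro x ⟨hx1, hx2⟩
    exact ⟨le_of_lt hx1, le_of_lt hx2⟩
  have huT : ∀ x : V m, ‖x.2‖ ≤ ‖x.1‖ → 0 ≤ u x ∧ u x ≤ 1 := by
    intro x hx
    rcases lt_or_eq_of_le hx with h | h
    · exact hu01 x h
    · have h0 := SC.u_zero_on_cone u hrad hodd h.symm
      rw [h0]; norm_num
  -- η facts
  have hη0 : ∀ x, 0 ≤ η x := fun x => le_max_right _ _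
  have hη1 : ∀ x, η x ≤ 1 := fun x => max_le (min_le_left _ _) zero_le_one
  have hηlip : ∀ x y : V m, |η x - η y| ≤ distE x y := by
    intro x y
    refine (abs_max_sub_max_le_abs _ _ _).trans ?_
    refine (abs_min_sub_min_le_max _ _ _ _).trans ?_
    refine max_le (by simpa using SC.distE_nonneg x y) ?_
    calc |nrm x - (S + 1) - (nrm y - (S + 1))| = |nrm x - nrm y| := by ring_nf
      _ ≤ distE x y := SC.abs_nrm_sub_nrm x y
  -- v facts
  have hv0 : ∀ x, -1 ≤ v x := by
    intro x; simp only [hv]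
    have := min_le_left (1 : ℝ) (μc * max (distC x) 0); linarith
  have hv1 : ∀ x, v x ≤ 0 := by
    intro x; simp only [hv]
    have : (0:ℝ) ≤ min 1 (μc * max (distC x) 0) :=
      le_min zero_le_one (by positivity)
    linarith
  have hvlip : ∀ x y : V m, |v x - v y| ≤ μc * distE x y := by
    intro x y
    have hA : |μc * max (distC x) 0 - μc * max (distC y) 0| ≤ μc * distE x y := by
      rw [← mul_sub, abs_mul, abs_of_pos hμc]
      exact mul_le_mul_of_nonneg_left
        ((abs_max_sub_max_le_abs _ _ _).trans (SC.distC_lip x y)) hμc.le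
    have h0 : (0:ℝ) ≤ μc * distE x y := mul_nonneg hμc.le (SC.distE_nonneg x y)
    have heq : v x - v y =
        -(min 1 (μc * max (distC x) 0) - min 1 (μc * max (distC y) 0)) := by
      simp only [hv]; ring
    rw [heq, abs_neg]
    exact (abs_min_sub_min_le_max _ _ _ _).trans (max_le (by simpa using h0) hA)
  have hulip' : ∀ x y : V m, nrm x ≤ S + 2 → nrm y ≤ S + 2 → |u x - u y| ≤ μc * distE x y :=
    fun x y hx hy => hulip x y (by linarith) (by linarith)
  -- invariance
  have hnrm_act : ∀ (R : G m) (x : V m), nrm (act R x) = nrm x := by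
    intro R x; unfold nrm; rw [SC.norm_act_fst, SC.norm_act_snd]
  have hdistC_act : ∀ (R : G m) (x : V m), distC (act R x) = distC x := by
    intro R x; unfold distC; rw [SC.norm_act_fst, SC.norm_act_snd]
  have hηact : ∀ (R : G m) (x : V m), η (act R x) = η x := by
    intro R x; simp only [hη]; rw [hnrm_act]
  have hvact : ∀ (R : G m) (x : V m), v (act R x) = v x := by
    intro R x; simp only [hv]; rw [hdistC_act]
  refine ⟨w, ?_, ?_, ?_, ?_, ?_, ?_, ?_⟩
  · -- H1
    intro x hx
    obtain ⟨-, hx2⟩ := hT hx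
    obtain ⟨hu0, hu1⟩ := huT x hx2
    have h1 := hη0 x; have h2 := hη1 x; have h3 := hv0 x; have h4 := hv1 x
    constructor
    · simp only [hw]
      nlinarith [mul_nonneg h1 hu0,
        mul_le_mul_of_nonneg_left h3 (show (0:ℝ) ≤ 1 - η x by linarith)]
    · simp only [hw]
      nlinarith [mul_le_mul_of_nonneg_left hu1 h1,
        mul_nonpos_of_nonneg_of_nonpos (show (0:ℝ) ≤ 1 - η x by linarith) h4]
  · -- H2 (doubly radial)
    intro R x _
    simp only [hw]
    rw [hηact R x, hvact R x, hrad R x]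
  · -- H2' (zero on cone)
    intro x hx _
    have hd : distC x = 0 := by unfold distC; rw [hx]; simp
    have hvx : v x = 0 := by simp [hv, hd]
    have hux : u x = 0 := SC.u_zero_on_cone u hrad hodd hx
    simp [hw, hvx, hux]
  · -- H3
    intro x _ hnr
    have hηx : η x = 1 := by
      simp only [hη]; rw [hnr]
      have h1 : S + 2 - (S + 1) = 1 := by ring
      rw [h1]; norm_num
    simp only [hw, hηx]; ring
  · -- H4
    intro x _ hnr hdc
    have hdpos : 0 < distC x := by nlinarith
    have hmax : max (distC x) 0 = distC x := max_eq_left hdpos.le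
    have hvx : v x = -1 := by
      simp only [hv]; rw [hmax, min_eq_left (by linarith)]
    have hηx : η x = 0 := by
      simp only [hη]
      exact max_eq_right ((min_le_right _ _).trans (by linarith))
    simp [hw, hvx, hηx]
  · -- H5 (global Lipschitz)
    intro x hx y hy
    obtain ⟨hxn, -⟩ := hT hx
    obtain ⟨hyn, hy2⟩ := hT hy
    have hdu := hulip' x y hxn hyn
    have hdv := hvlip x y
    have hdη := hηlip x y
    have huy := huT y hy2
    have hvy0 := hv0 y; have hvy1 := hv1 y
    have hηx0 := hη0 x; have hηx1 := hη1 x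
    have hd0 := SC.distE_nonneg x y
    have decomp : w x - w y =
        (1 - η x) * (v x - v y) + η x * (u x - u y) + (η x - η y) * (u y - v y) := by
      simp only [hw]; ring
    have t1 : |(1 - η x) * (v x - v y)| ≤ μc * distE x y := by
      rw [abs_mul, abs_of_nonneg (by linarith : (0:ℝ) ≤ 1 - η x)]
      nlinarith [abs_nonneg (v x - v y)]
    have t2 : |η x * (u x - u y)| ≤ μc * distE x y := by
      rw [abs_mul, abs_of_nonneg hηx0]
      nlinarith [abs_nonneg (u x - u y)]
    have t3 : |(η x - η y) * (u y - v y)| ≤ 2 * distE x y := by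
      rw [abs_mul]
      have huv : |u y - v y| ≤ 2 := by
        rw [abs_of_nonneg (by linarith)]; linarith
      nlinarith [abs_nonneg (η x - η y)]
    rw [decomp]
    refine ((abs_add_le _ _).trans (add_le_add (abs_add_le _ _) le_rfl)).trans ?_
    nlinarith [t1, t2, t3]
  · -- H5' (near the cone)
    intro x y hxO hyO hxn hyn h1x h1y
    have hs2 : (0:ℝ) < Real.sqrt 2 := by positivity
    have hdx : 0 < distC x := div_pos (sub_pos.mpr hxO) hs2
    have hdy : 0 < distC y := div_pos (sub_pos.mpr hyO) hs2
    have hvx : v x = -1 := by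
      simp only [hv]; rw [max_eq_left hdx.le, min_eq_left h1x]
    have hvy : v y = -(μc * distC y) := by
      simp only [hv]; rw [max_eq_left hdy.le, min_eq_right h1y]
    have hηx : η x = 0 := by
      simp only [hη]
      exact max_eq_right ((min_le_right _ _).trans (by linarith))
    have hηy : η y = 0 := by
      simp only [hη]
      exact max_eq_right ((min_le_right _ _).trans (by linarith))
    have hwx : w x = -1 := by simp only [hw, hηx, hvx]; ring
    have hwy : w y = -(μc * distC y) := by simp only [hw, hηy, hvy]; ring
    rw [hwx, hwy]
    have habs : |(-1 : ℝ) - -(μc * distC y)| = 1 - μc * distC y := by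
      rw [show (-1:ℝ) - -(μc * distC y) = -(1 - μc * distC y) by ring, abs_neg,
        abs_of_nonneg (by linarith)]
    rw [habs, div_mul_eq_mul_div, le_div_iff₀ hdx]
    have hlip := SC.distC_lip x y
    have hd0 := SC.distE_nonneg x y
    have hge : distC x - distC y ≤ distE x y := (le_abs_self _).trans hlip
    rcases le_or_gt (μc * distC x) 2 with hcase | hcase
    · have k1 : 1 - μc * distC y ≤ μc * distE x y := by
        nlinarith [mul_le_mul_of_nonneg_left hge hμc.le]
      have k2 : (1 - μc * distC y) * distC x ≤ (μc * distE x y) * distC x :=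
        mul_le_mul_of_nonneg_right k1 hdx.le
      have k3 : (μc * distE x y) * distC x ≤ 2 * distE x y := by
        nlinarith [mul_le_mul_of_nonneg_right hcase hd0]
      have k4 : 2 * distE x y ≤ (2 * μc + 2) * distE x y := by nlinarith
      linarith
    · have k1 : distC x ≤ 2 * distE x y := by
        nlinarith [mul_le_mul_of_nonneg_left hge hμc.le]
      have k0 : (0:ℝ) ≤ 1 - μc * distC y := by linarith
      have k2 : (1 - μc * distC y) * distC x ≤ distC x := by
        nlinarith [mul_le_mul_of_nonneg_right
          (show 1 - μc * distC y ≤ 1 by nlinarith [mul_pos hμc hdy]) hdx.le]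
      have k4 : (2:ℝ) * distE x y ≤ (2 * μc + 2) * distE x y := by nlinarith
      linarith
end
end

section
/- Convexity characterization via a four-point inequality. Let K : (0,∞) → (0,∞) be measurable. The following are equivalent. (i) τ ↦ K(√τ) is strictly convex on (0,∞), i.e., K(√τ₁) + K(√τ₂) > 2 K(√((τ₁+τ₂)/2)) for all τ₁ ≠ τ₂ in (0,∞). (ii) For all constants c₁ > 0 and c₂ > 0, the function g : (0, 1/c₂) → ℝ defined by g(z) := K(c₁ √(1 + c₂ z)) + K(c₁ √(1 − c₂ z)) satisfies g(A) + g(D) ≥ g(B) + g(C) whenever A, B, C, D ∈ (0, 1/c₂) satisfy A = max{A, B, C, D} and A + D ≥ B + C; moreover, under these constraints, equality g(A) + g(D) = g(B) + g(C) holds if and only if the (unordered) pairs {A, D} and {B, C} coincide. -/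
noncomputable section

open Set MeasureTheory Filter

section Sierpinski

variable {f : ℝ → ℝ} {a b : ℝ}

lemma midpoint_convex_loc_bdd (hf : Measurable f)
    (hmid : ∀ x ∈ Ioo a b, ∀ y ∈ Ioo a b, 2 * f ((x + y) / 2) ≤ f x + f y)
    {x₀ : ℝ} (hx₀ : x₀ ∈ Ioo a b) :
    ∃ δ > 0, ∃ M : ℝ, ∀ z, |z - x₀| ≤ δ → z ∈ Ioo a b ∧ f z ≤ M := by
  set δ₀ := min (x₀ - a) (b - x₀) / 2 with hδ₀
  have hδ₀pos : 0 < δ₀ := by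
    have h1 : 0 < x₀ - a := by linarith [hx₀.1]
    have h2 : 0 < b - x₀ := by linarith [hx₀.2]
    have := lt_min h1 h2
    positivity
  have hJsub : Icc (x₀ - δ₀) (x₀ + δ₀) ⊆ Ioo a b := by
    intro z hz
    have h1 : δ₀ ≤ (x₀ - a) / 2 := by
      simp only [hδ₀]; have := min_le_left (x₀ - a) (b - x₀); linarith
    have h2 : δ₀ ≤ (b - x₀) / 2 := by
      simp only [hδ₀]; have := min_le_right (x₀ - a) (b - x₀); linarith
    exact ⟨by linarith [hz.1, hx₀.1], by linarith [hz.2, hx₀.2]⟩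
  -- find n with small exceptional set
  set A : ℕ → Set ℝ := fun n => {x ∈ Icc (x₀ - δ₀) (x₀ + δ₀) | f x ≤ n} with hA
  set B : ℕ → Set ℝ := fun n => Icc (x₀ - δ₀) (x₀ + δ₀) \ A n with hB
  have hAmeas : ∀ n, MeasurableSet (A n) :=
    fun n => (measurableSet_Icc).inter (hf measurableSet_Iic)
  have hBmeas : ∀ n, MeasurableSet (B n) := fun n => measurableSet_Icc.diff (hAmeas n)
  have hBanti : Antitone B := by
    intro m n hmn
    apply diff_subset_diff_right
    intro x hx
    exact ⟨hx.1, hx.2.trans (by exact_mod_cast Nat.cast_le.2 hmn)⟩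
  have hBInter : ⋂ n, B n = ∅ := by
    ext x
    simp only [mem_iInter, mem_empty_iff_false, iff_false, not_forall]
    obtain ⟨n, hn⟩ := exists_nat_ge (f x)
    exact ⟨n, fun hc => hc.2 ⟨hc.1, hn⟩⟩
  have hBfin : volume (B 0) ≠ ⊤ := by
    apply ne_of_lt
    apply lt_of_le_of_lt (measure_mono (diff_subset))
    rw [Real.volume_Icc]
    exact ENNReal.ofReal_lt_top
  have htend : Tendsto (volume ∘ B) atTop (nhds 0) := by
    have := tendsto_measure_iInter_atTop (μ := volume)
      (fun n => (hBmeas n).nullMeasurableSet) hBanti ⟨0, hBfin⟩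
    rwa [hBInter, measure_empty] at this
  have hsmall : ∀ᶠ n in atTop, volume (B n) < ENNReal.ofReal (δ₀ / 2) := by
    apply htend.eventually_lt_const
    simp [ENNReal.ofReal_pos]
    positivity
  obtain ⟨n, hn⟩ := hsmall.exists
  refine ⟨δ₀ / 2, by positivity, n, ?_⟩
  intro z hz
  have hzJ : z ∈ Icc (x₀ - δ₀) (x₀ + δ₀) := by
    rw [abs_le] at hz
    constructor <;> [linarith [hz.1]; linarith [hz.2]]
  have hzab : z ∈ Ioo a b := hJsub hzJ
  refine ⟨hzab, ?_⟩
  -- the reflected bad set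
  set σ : ℝ → ℝ := fun x => 2 * z - x with hσ
  have hσvol : ∀ s : Set ℝ, volume (σ ⁻¹' s) = volume s := by
    intro s
    have : σ ⁻¹' s = Neg.neg ⁻¹' ((fun x => 2 * z + x) ⁻¹' s) := by
      ext x; simp [hσ, sub_eq_add_neg]
    rw [this, Measure.measure_preimage_neg, measure_preimage_add]
  -- the interval around z
  set O : Set ℝ := Icc (z - δ₀ / 2) (z + δ₀ / 2) with hO
  have hOsub : O ⊆ Icc (x₀ - δ₀) (x₀ + δ₀) := by
    intro w hw
    rw [abs_le] at hz
    exact ⟨by linarith [hw.1, hz.1], by linarith [hw.2, hz.2]⟩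
  have hOσ : ∀ w ∈ O, σ w ∈ O := by
    intro w hw
    exact ⟨by simp only [hσ]; linarith [hw.2], by simp only [hσ]; linarith [hw.1]⟩
  -- O is not contained in B n ∪ σ ⁻¹' (B n)
  have hvolO : volume O = ENNReal.ofReal δ₀ := by
    rw [hO, Real.volume_Icc]
    congr 1
    ring
  have hnotsub : ¬ (O ⊆ B n ∪ σ ⁻¹' (B n)) := by
    intro hsub
    have h1 : volume O ≤ volume (B n ∪ σ ⁻¹' (B n)) := measure_mono hsub
    have h2 : volume (B n ∪ σ ⁻¹' (B n)) ≤ volume (B n) + volume (σ ⁻¹' (B n)) :=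
      measure_union_le _ _
    rw [hσvol] at h2
    have h3 : volume (B n) + volume (B n) < ENNReal.ofReal (δ₀ / 2) + ENNReal.ofReal (δ₀ / 2) := by
      exact ENNReal.add_lt_add hn hn
    rw [← ENNReal.ofReal_add (by positivity) (by positivity)] at h3
    have : (δ₀ / 2 + δ₀ / 2) = δ₀ := by ring
    rw [this] at h3
    rw [hvolO] at h1
    exact absurd (lt_of_le_of_lt (h1.trans h2) h3) (lt_irrefl _)
  obtain ⟨w, hwO, hwnot⟩ := not_subset.1 hnotsub
  simp only [mem_union, not_or] at hwnot
  have hwJ : w ∈ Icc (x₀ - δ₀) (x₀ + δ₀) := hOsub hwO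
  have hσwJ : σ w ∈ Icc (x₀ - δ₀) (x₀ + δ₀) := hOsub (hOσ w hwO)
  have hwA : w ∈ A n := by
    by_contra hc
    exact hwnot.1 ⟨hwJ, hc⟩
  have hσwA : σ w ∈ A n := by
    by_contra hc
    exact hwnot.2 (by exact ⟨hσwJ, hc⟩ : σ w ∈ B n)
  have hfw : f w ≤ n := hwA.2
  have hfσw : f (σ w) ≤ n := hσwA.2
  have hmid' := hmid w (hJsub hwJ) (σ w) (hJsub hσwJ)
  have : (w + σ w) / 2 = z := by simp only [hσ]; ring
  rw [this] at hmid'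
  linarith

lemma midpoint_convex_continuousAt
    (hmid : ∀ x ∈ Ioo a b, ∀ y ∈ Ioo a b, 2 * f ((x + y) / 2) ≤ f x + f y)
    {x₀ δ M : ℝ} (hδ : 0 < δ) (hball : ∀ z, |z - x₀| ≤ δ → z ∈ Ioo a b ∧ f z ≤ M) :
    ContinuousAt f x₀ := by
  have hx₀ : x₀ ∈ Ioo a b := (hball x₀ (by simp [hδ.le])).1
  have hfM : f x₀ ≤ M := (hball x₀ (by simp [hδ.le])).2
  -- dyadic upper bound
  have key : ∀ n : ℕ, ∀ z, |z - x₀| ≤ δ / 2 ^ n →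
      f z ≤ f x₀ + (M - f x₀) / 2 ^ n := by
    intro n
    induction n with
    | zero =>
      intro z hz
      have := (hball z (by simpa using hz)).2
      simpa using this.trans_eq (by ring)
    | succ n ih =>
      intro z hz
      have h2 : |(2 * z - x₀) - x₀| ≤ δ / 2 ^ n := by
        have : (2 * z - x₀) - x₀ = 2 * (z - x₀) := by ring
        rw [this, abs_mul, abs_two]
        rw [pow_succ, ← div_div] at hz
        have hp : (0:ℝ) < 2 ^ n := by positivity
        linarith
      have hb2 : (2 * z - x₀) ∈ Ioo a b := by
        refine (hball _ (le_trans h2 ?_)).1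
        apply div_le_self hδ.le
        exact one_le_pow₀ one_le_two
      have hz1 : z ∈ Ioo a b := (hball z (hz.trans (by
        apply div_le_self hδ.le
        exact one_le_pow₀ one_le_two))).1
      have := hmid x₀ hx₀ (2 * z - x₀) hb2
      have hmidpt : (x₀ + (2 * z - x₀)) / 2 = z := by ring
      rw [hmidpt] at this
      have := ih (2 * z - x₀) h2
      rw [pow_succ, ← div_div]
      linarith
  rw [Metric.continuousAt_iff]
  intro ε hε
  -- choose n with (M - f x₀)/2^n < ε/2
  obtain ⟨n, hn⟩ : ∃ n : ℕ, (M - f x₀) / 2 ^ n < ε / 2 := by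
    obtain ⟨n, hn⟩ := pow_unbounded_of_one_lt ((M - f x₀) / (ε / 2)) (one_lt_two (α := ℝ))
    refine ⟨n, ?_⟩
    rw [div_lt_iff₀ (by positivity)] at hn ⊢
    nlinarith
  refine ⟨δ / 2 ^ n, by positivity, ?_⟩
  intro y hy
  rw [Real.dist_eq] at hy ⊢
  have hy' : |y - x₀| ≤ δ / 2 ^ n := hy.le
  have hupper : f y ≤ f x₀ + ε / 2 := by
    have := key n y hy'
    linarith
  have hrefl : |(2 * x₀ - y) - x₀| ≤ δ / 2 ^ n := by
    have : (2 * x₀ - y) - x₀ = -(y - x₀) := by ring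
    rw [this, abs_neg]; exact hy'
  have hupper2 : f (2 * x₀ - y) ≤ f x₀ + ε / 2 := by
    have := key n (2 * x₀ - y) hrefl
    linarith
  have hyb : y ∈ Ioo a b := (hball y (hy'.trans (div_le_self hδ.le (one_le_pow₀ one_le_two)))).1
  have hyb2 : (2 * x₀ - y) ∈ Ioo a b :=
    (hball _ (hrefl.trans (div_le_self hδ.le (one_le_pow₀ one_le_two)))).1
  have hlower : f x₀ - ε / 2 ≤ f y := by
    have := hmid y hyb (2 * x₀ - y) hyb2
    have hmidpt : (y + (2 * x₀ - y)) / 2 = x₀ := by ring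
    rw [hmidpt] at this
    linarith
  rw [abs_sub_lt_iff]
  constructor <;> linarith

lemma midpoint_convex_convexOn
    (hmid : ∀ x ∈ Ioo a b, ∀ y ∈ Ioo a b, 2 * f ((x + y) / 2) ≤ f x + f y)
    (hcont : ∀ x ∈ Ioo a b, ContinuousAt f x) :
    ConvexOn ℝ (Ioo a b) f := by
  refine ⟨convex_Ioo a b, ?_⟩
  intro x hx y hy p q hp hq hpq
  rcases eq_or_lt_of_le hp with hp0 | hp0
  · simp only [← hp0] at hpq ⊢
    simp only [zero_add] at hpq
    simp [hpq]
  rcases eq_or_lt_of_le hq with hq0 | hq0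
  · simp only [← hq0] at hpq ⊢
    simp only [add_zero] at hpq
    simp [hpq]
  rcases eq_or_ne x y with rfl | hxy
  · have h1 : p • x + q • x = x := by rw [← add_smul, hpq, one_smul]
    have h2 : p • f x + q • f x = f x := by rw [← add_smul, hpq, one_smul]
    rw [h1, h2]
  -- main case
  -- the segment map
  set L : ℝ → ℝ := fun t => x + t * (y - x) with hL
  have hseg : ∀ t ∈ Icc (0:ℝ) 1, L t ∈ Ioo a b := by
    intro t ht
    rcases le_total x y with h | h
    · constructor
      · have : x ≤ L t := by simp only [hL]; nlinarith [ht.1, ht.2]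
        linarith [hx.1]
      · have : L t ≤ y := by simp only [hL]; nlinarith [ht.1, ht.2]
        linarith [hy.2]
    · constructor
      · have : y ≤ L t := by simp only [hL]; nlinarith [ht.1, ht.2]
        linarith [hy.1]
      · have : L t ≤ x := by simp only [hL]; nlinarith [ht.1, ht.2]
        linarith [hx.2]
  set u : ℝ → ℝ := fun t => f (L t) - (f x + t * (f y - f x)) with hu
  have hucont : ContinuousOn u (Icc 0 1) := by
    apply ContinuousOn.sub
    · apply ContinuousOn.comp (t := Ioo a b)
      · exact fun z hz => (hcont z hz).continuousWithinAt
      · fun_prop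
      · exact hseg
    · fun_prop
  -- u is midpoint convex on Icc 0 1
  have humid : ∀ s ∈ Icc (0:ℝ) 1, ∀ t ∈ Icc (0:ℝ) 1,
      2 * u ((s + t) / 2) ≤ u s + u t := by
    intro s hs t ht
    have h1 := hmid (L s) (hseg s hs) (L t) (hseg t ht)
    have hmidL : (L s + L t) / 2 = L ((s + t) / 2) := by simp only [hL]; ring
    rw [hmidL] at h1
    simp only [hu]
    linarith
  -- claim : u ≤ 0 on Icc 0 1
  have hu0 : u 0 = 0 := by simp [hu, hL]
  have hu1 : u 1 = 0 := by
    show f (x + 1 * (y - x)) - (f x + 1 * (f y - f x)) = 0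
    rw [show x + 1 * (y - x) = y by ring]; ring
  have hle : ∀ t ∈ Icc (0:ℝ) 1, u t ≤ 0 := by
    by_contra hcon
    push_neg at hcon
    obtain ⟨t₀, ht₀, ht₀pos⟩ := hcon
    obtain ⟨c, hcI, hc⟩ := isCompact_Icc.exists_isMaxOn (⟨0, by simp⟩ : (Icc (0:ℝ) 1).Nonempty) hucont
    have hMpos : 0 < u c := lt_of_lt_of_le ht₀pos (hc ht₀)
    set S : Set ℝ := Icc (0:ℝ) 1 ∩ u ⁻¹' {u c} with hS
    have hSmem : ∀ t, t ∈ S ↔ t ∈ Icc (0:ℝ) 1 ∧ u t = u c := by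
      intro t; simp [hS]
    have hSne : S.Nonempty := ⟨c, (hSmem c).2 ⟨hcI, rfl⟩⟩
    have hSbdd : BddBelow S := ⟨0, fun t ht => ((hSmem t).1 ht).1.1⟩
    have hSclosed : IsClosed S :=
      hucont.preimage_isClosed_of_isClosed isClosed_Icc isClosed_singleton
    set c₀ := sInf S with hc₀
    have hc₀S : c₀ ∈ S := hSclosed.csInf_mem hSne hSbdd
    have hc₀I : c₀ ∈ Icc (0:ℝ) 1 := ((hSmem c₀).1 hc₀S).1
    have hc₀val : u c₀ = u c := ((hSmem c₀).1 hc₀S).2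
    have hc₀ne0 : c₀ ≠ 0 := by intro h; rw [h, hu0] at hc₀val; linarith
    have hc₀ne1 : c₀ ≠ 1 := by intro h; rw [h, hu1] at hc₀val; linarith
    have hc₀pos : 0 < c₀ := lt_of_le_of_ne hc₀I.1 (Ne.symm hc₀ne0)
    have hc₀lt1 : c₀ < 1 := lt_of_le_of_ne hc₀I.2 hc₀ne1
    set h := min c₀ (1 - c₀) / 2 with hh
    have hhpos : 0 < h := by
      have := lt_min hc₀pos (by linarith : (0:ℝ) < 1 - c₀)
      positivity
    have hm1 : c₀ - h ∈ Icc (0:ℝ) 1 := by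
      constructor
      · have : h ≤ c₀ / 2 := by
          simp only [hh]
          have := min_le_left c₀ (1 - c₀)
          linarith
        linarith
      · linarith
    have hm2 : c₀ + h ∈ Icc (0:ℝ) 1 := by
      constructor
      · linarith [hm1.1, hhpos]
      · have : h ≤ (1 - c₀) / 2 := by
          simp only [hh]
          have := min_le_right c₀ (1 - c₀)
          linarith
        linarith
    have hmidc : ((c₀ - h) + (c₀ + h)) / 2 = c₀ := by ring
    have h1 := humid (c₀ - h) hm1 (c₀ + h) hm2
    rw [hmidc] at h1
    have hlt : u (c₀ - h) < u c := by
      refine lt_of_le_of_ne (hc hm1) ?_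
      intro heq
      have : c₀ - h ∈ S := (hSmem _).2 ⟨hm1, heq⟩
      have := csInf_le hSbdd this
      simp only [← hc₀] at this
      linarith
    have hle2 : u (c₀ + h) ≤ u c := hc hm2
    rw [hc₀val] at h1
    linarith
  -- conclude
  have hp' : p = 1 - q := by linarith
  have harg : L q = p • x + q • y := by
    simp only [hL, smul_eq_mul, hp']; ring
  have hq1 := hle q ⟨hq, by linarith⟩
  simp only [hu] at hq1
  rw [harg] at hq1
  simp only [smul_eq_mul, hp'] at hq1 ⊢
  linarith

lemma sierpinski (hf : Measurable f)
    (hmid : ∀ x ∈ Ioo a b, ∀ y ∈ Ioo a b, 2 * f ((x + y) / 2) ≤ f x + f y) :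
    ConvexOn ℝ (Ioo a b) f := by
  refine midpoint_convex_convexOn hmid (fun x hx => ?_)
  obtain ⟨δ, hδ, M, hM⟩ := midpoint_convex_loc_bdd hf hmid hx
  exact midpoint_convex_continuousAt hmid hδ hM

lemma strictConvexOn_of_convexOn_midpoint
    (hconv : ConvexOn ℝ (Ioo a b) f)
    (hmid : ∀ x ∈ Ioo a b, ∀ y ∈ Ioo a b, x ≠ y → 2 * f ((x + y) / 2) < f x + f y) :
    StrictConvexOn ℝ (Ioo a b) f := by
  -- helper : case 1/2 ≤ p
  have helper : ∀ x ∈ Ioo a b, ∀ y ∈ Ioo a b, x ≠ y → ∀ p q : ℝ, 0 < p → 0 < q →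
      p + q = 1 → 1/2 ≤ p → f (p * x + q * y) < p * f x + q * f y := by
    intro x hx y hy hxy p q hp hq hpq hhalf
    set z := p * x + q * y with hz
    have hq2 : 2 * q ≤ 1 := by linarith
    -- 2z - x = (2p-1) x + 2q y is a convex combination
    have hcomb : (2 * p - 1) + 2 * q = 1 := by linarith
    have hmem : (2 * p - 1) * x + (2 * q) * y ∈ Ioo a b := by
      have := hconv.1 hx hy (by linarith : (0:ℝ) ≤ 2*p-1) (by linarith : (0:ℝ) ≤ 2*q) hcomb
      simpa using this
    have hzx : 2 * z - x = (2 * p - 1) * x + (2 * q) * y := by rw [hz]; ring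
    have hne : x ≠ 2 * z - x := by
      intro h
      have : x = z := by linarith [h]
      rw [hz] at this
      have h0 : q * (y - x) = 0 := by
        have e : q * (y - x) = (p * x + q * y) - x + (1 - p - q) * x := by ring
        rw [e, ← this]
        have e2 : 1 - p - q = 0 := by linarith
        rw [e2]; ring
      rcases mul_eq_zero.1 h0 with h' | h'
      · linarith
      · exact hxy (by linarith)
    have h1 : 2 * f ((x + (2 * z - x)) / 2) < f x + f (2 * z - x) := by
      apply hmid x hx (2 * z - x) (by rw [hzx]; exact hmem) hne
    have hmidz : (x + (2 * z - x)) / 2 = z := by ring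
    rw [hmidz] at h1
    have h2 : f (2 * z - x) ≤ (2 * p - 1) * f x + (2 * q) * f y := by
      have := hconv.2 hx hy (by linarith : (0:ℝ) ≤ 2*p-1) (by linarith : (0:ℝ) ≤ 2*q) hcomb
      simp only [smul_eq_mul] at this
      rw [hzx]
      exact this
    linarith
  refine ⟨hconv.1, ?_⟩
  intro x hx y hy hxy p q hp hq hpq
  simp only [smul_eq_mul]
  rcases le_total (1/2 : ℝ) p with h | h
  · exact helper x hx y hy hxy p q hp hq hpq h
  · have := helper y hy x hx (Ne.symm hxy) q p hq hp (by linarith) (by linarith)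
    calc f (p * x + q * y) = f (q * y + p * x) := by rw [add_comm]
    _ < q * f y + p * f x := this
    _ = p * f x + q * f y := by ring

end Sierpinski

lemma fourpoint {G : ℝ → ℝ} {L : ℝ} (hL : 0 < L)
    (hconv : StrictConvexOn ℝ (Ioo (-L) L) G)
    (heven : ∀ z, G (-z) = G z)
    {A B C D : ℝ} (hA : A ∈ Ioo 0 L) (hB : B ∈ Ioo 0 L) (hC : C ∈ Ioo 0 L) (hD : D ∈ Ioo 0 L)
    (hBA : B ≤ A) (hCA : C ≤ A) (hDA : D ≤ A) (hsum : B + C ≤ A + D) :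
    G B + G C ≤ G A + G D ∧ (G A + G D = G B + G C ↔ ({A, D} : Set ℝ) = {B, C}) := by
  have hsub : Ioo (0:ℝ) L ⊆ Ioo (-L) L := fun x hx => ⟨by linarith [hx.1], hx.2⟩
  -- strict monotonicity on (0, L)
  have hmono : ∀ x y : ℝ, 0 < x → x < y → y < L → G x < G y := by
    intro x y hx hxy hyL
    have hy : 0 < y := hx.trans hxy
    have hmy : -y ∈ Ioo (-L) L := ⟨by linarith, by linarith⟩
    have hyI : y ∈ Ioo (-L) L := ⟨by linarith, hyL⟩
    have hne : -y ≠ y := by intro h; linarith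
    set p := (y - x) / (2 * y) with hp
    set q := (x + y) / (2 * y) with hq
    have hppos : 0 < p := by apply div_pos <;> linarith
    have hqpos : 0 < q := by apply div_pos <;> linarith
    have hpq : p + q = 1 := by rw [hp, hq]; field_simp; ring
    have hxc : p • (-y) + q • y = x := by
      rw [hp, hq]
      simp only [smul_eq_mul]
      field_simp
      ring
    have := hconv.2 hmy hyI hne hppos hqpos hpq
    rw [hxc, heven y] at this
    calc G x < p * G y + q * G y := by simpa using this
    _ = G y := by rw [← add_mul, hpq, one_mul]
  have hmono' : ∀ x y : ℝ, 0 < x → x ≤ y → y < L → G x ≤ G y := by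
    intro x y hx hxy hyL
    rcases eq_or_lt_of_le hxy with rfl | h
    · exact le_rfl
    · exact (hmono x y hx h hyL).le
  -- strict spread inequality
  have hspread : ∀ p q u v : ℝ, p ∈ Ioo (0:ℝ) L → q ∈ Ioo (0:ℝ) L →
      p < u → u ≤ v → v < q → p + q = u + v → G u + G v < G p + G q := by
    intro p q u v hpI hqI hpu huv hvq hsum'
    have hpq : p < q := by linarith
    set d := q - p with hd
    have hdpos : 0 < d := by linarith
    have hu : u = ((q - u) / d) • p + ((u - p) / d) • q := by
      simp only [smul_eq_mul]
      field_simp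
      ring
    have hv : v = ((q - v) / d) • p + ((v - p) / d) • q := by
      simp only [smul_eq_mul]
      field_simp
      ring
    have h1 : G u < ((q - u) / d) * G p + ((u - p) / d) * G q := by
      have := hconv.2 (hsub hpI) (hsub hqI) (by intro h; linarith : p ≠ q)
        (div_pos (by linarith) (by linarith) : 0 < (q - u) / d)
        (div_pos (by linarith) (by linarith) : 0 < (u - p) / d)
        (by rw [← add_div, div_eq_one_iff_eq (ne_of_gt hdpos)]; linarith : (q - u) / d + (u - p) / d = 1)
      rw [← hu] at this
      simpa using this
    have h2 : G v < ((q - v) / d) * G p + ((v - p) / d) * G q := by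
      have := hconv.2 (hsub hpI) (hsub hqI) (by intro h; linarith : p ≠ q)
        (div_pos (by linarith) (by linarith) : 0 < (q - v) / d)
        (div_pos (by linarith) (by linarith) : 0 < (v - p) / d)
        (by rw [← add_div, div_eq_one_iff_eq (ne_of_gt hdpos)]; linarith : (q - v) / d + (v - p) / d = 1)
      rw [← hv] at this
      simpa using this
    have hc1 : (q - u) / d + (q - v) / d = 1 := by
      rw [← add_div, hd]
      rw [div_eq_one_iff_eq (by linarith : q - p ≠ 0)]
      linarith
    have hc2 : (u - p) / d + (v - p) / d = 1 := by
      rw [← add_div, hd]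
      rw [div_eq_one_iff_eq (by linarith : q - p ≠ 0)]
      linarith
    have key1 : (q - u) / d * G p + (q - v) / d * G p = G p := by
      rw [← add_mul, hc1, one_mul]
    have key2 : (u - p) / d * G q + (v - p) / d * G q = G q := by
      rw [← add_mul, hc2, one_mul]
    linarith [h1, h2]
  -- main case analysis, assuming C ≤ B
  have main : ∀ B C : ℝ, B ∈ Ioo (0:ℝ) L → C ∈ Ioo (0:ℝ) L → C ≤ B → B ≤ A → C ≤ A →
      B + C ≤ A + D →
      G B + G C ≤ G A + G D ∧ (G A + G D = G B + G C ↔ ({A, D} : Set ℝ) = {B, C}) := by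
    intro B C hB hC hCB hBA hCA hsum
    rcases le_or_gt C D with hCD | hDC
    · -- easy case : C ≤ D, B ≤ A
      have g1 : G B ≤ G A := hmono' B A hB.1 hBA hA.2
      have g2 : G C ≤ G D := hmono' C D hC.1 hCD hD.2
      refine ⟨by linarith, ?_, ?_⟩
      · intro heq
        have hGBA : G B = G A := by
          by_contra hne
          have : G B < G A := lt_of_le_of_ne g1 hne
          linarith
        have hGCD : G C = G D := by linarith
        have hBAe : B = A := by
          by_contra hne
          have : B < A := lt_of_le_of_ne hBA hne
          have := hmono B A hB.1 this hA.2
          linarith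
        have hCDe : C = D := by
          by_contra hne
          have : C < D := lt_of_le_of_ne hCD hne
          have := hmono C D hC.1 this hD.2
          linarith
        rw [hBAe, hCDe]
      · intro hset
        rcases Set.pair_eq_pair_iff.1 hset with ⟨h1, h2⟩ | ⟨h1, h2⟩
        · rw [h1, h2]
        · -- A = C and D = B : then all equal
          have : A = C := h1
          have : B = A := le_antisymm hBA (this ▸ hCB)
          have hDB : D = B := h2
          rw [h1, hDB]; ring
    · -- hard case : D < C
      set E := B + C - D with hE
      have hBE : B < E := by simp only [hE]; linarith
      have hEA : E ≤ A := by simp only [hE]; linarith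
      have hEI : E ∈ Ioo (0:ℝ) L := ⟨by linarith [hB.1], lt_of_le_of_lt hEA hA.2⟩
      have hsp : G C + G B < G D + G E := by
        have := hspread D E C B hD hEI hDC hCB hBE (by simp only [hE]; ring)
        linarith
      have hGEA : G E ≤ G A := hmono' E A hEI.1 hEA hA.2
      have hstrict : G B + G C < G A + G D := by linarith
      refine ⟨hstrict.le, ?_, ?_⟩
      · intro heq; linarith
      · intro hset
        exfalso
        rcases Set.pair_eq_pair_iff.1 hset with ⟨h1, h2⟩ | ⟨h1, h2⟩
        · exact absurd h2 (ne_of_lt hDC)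
        · -- A = C, D = B : D = B ≥ C > D
          have : C ≤ B := hCB
          rw [← h2] at this
          linarith
  rcases le_total C B with h | h
  · exact main B C hB hC h hBA hCA hsum
  · have := main C B hC hB h hCA hBA (by linarith)
    refine ⟨by linarith [this.1], ?_⟩
    rw [show ({B, C} : Set ℝ) = {C, B} from Set.pair_comm B C]
    constructor
    · intro heq
      exact this.2.1 (by linarith)
    · intro hset
      have := this.2.2 hset
      linarith

/-- The auxiliary function `g(z) = K(c₁√(1 + c₂ z)) + K(c₁√(1 − c₂ z))`. -/
def gaux (K : ℝ → ℝ) (c₁ c₂ z : ℝ) : ℝ :=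
  K (c₁ * Real.sqrt (1 + c₂ * z)) + K (c₁ * Real.sqrt (1 - c₂ * z))

def fK (K : ℝ → ℝ) : ℝ → ℝ := fun τ => K (Real.sqrt τ)

def FK (K : ℝ → ℝ) : ℝ → ℝ → ℝ := fun m t => fK K (m + t) + fK K (m - t)

theorem reverse_dir (K : ℝ → ℝ)
    (hKpos : ∀ τ : ℝ, 0 < τ → 0 < K τ)
    (H : ∀ c₁ c₂ : ℝ, 0 < c₁ → 0 < c₂ →
      ∀ A B C D : ℝ, A ∈ Set.Ioo 0 (1 / c₂) → B ∈ Set.Ioo 0 (1 / c₂) →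
        C ∈ Set.Ioo 0 (1 / c₂) → D ∈ Set.Ioo 0 (1 / c₂) →
        B ≤ A → C ≤ A → D ≤ A → B + C ≤ A + D →
        (gaux K c₁ c₂ B + gaux K c₁ c₂ C ≤ gaux K c₁ c₂ A + gaux K c₁ c₂ D ∧
          (gaux K c₁ c₂ A + gaux K c₁ c₂ D = gaux K c₁ c₂ B + gaux K c₁ c₂ C ↔
            ({A, D} : Set ℝ) = {B, C}))) :
    ∀ τ₁ τ₂ : ℝ, 0 < τ₁ → 0 < τ₂ → τ₁ ≠ τ₂ →
        2 * K (Real.sqrt ((τ₁ + τ₂) / 2)) < K (Real.sqrt τ₁) + K (Real.sqrt τ₂) := by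
  have hfpos : ∀ τ : ℝ, 0 < τ → 0 < fK K τ := by
    intro τ hτ
    exact hKpos _ (Real.sqrt_pos.2 hτ)
  have hFpos : ∀ m t : ℝ, 0 < t → t < m → 0 < FK K m t := by
    intro m t ht htm
    have h1 := hfpos (m + t) (by linarith)
    have h2 := hfpos (m - t) (by linarith)
    simp only [FK]
    linarith
  -- the key identification
  have key : ∀ m t : ℝ, 0 < m → gaux K (Real.sqrt m) 1 (t / m) = FK K m t := by
    intro m t hm
    unfold gaux
    have e1 : Real.sqrt m * Real.sqrt (1 + 1 * (t / m)) = Real.sqrt (m + t) := by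
      rw [← Real.sqrt_mul hm.le]
      congr 1
      field_simp
      try ring
    have e2 : Real.sqrt m * Real.sqrt (1 - 1 * (t / m)) = Real.sqrt (m - t) := by
      rw [← Real.sqrt_mul hm.le]
      congr 1
      field_simp
      try ring
    rw [e1, e2]
    rfl
  have honeIoo : ∀ m t : ℝ, 0 < m → 0 < t → t < m → t / m ∈ Ioo (0:ℝ) (1 / 1) := by
    intro m t hm ht htm
    rw [show (1:ℝ)/1 = 1 by norm_num]
    exact ⟨by positivity, (div_lt_one hm).2 htm⟩
  -- R1 : strict monotonicity of FK K m on (0, m)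
  have R1 : ∀ m t₁ t₂ : ℝ, 0 < m → 0 < t₁ → t₁ < t₂ → t₂ < m → FK K m t₁ < FK K m t₂ := by
    intro m t₁ t₂ hm ht₁ ht₁₂ ht₂m
    have hsm : 0 < Real.sqrt m := Real.sqrt_pos.2 hm
    have hmem₂ := honeIoo m t₂ hm (by linarith) ht₂m
    have hmem₁ := honeIoo m t₁ hm ht₁ (by linarith)
    have hle : t₁ / m ≤ t₂ / m := by gcongr <;> linarith
    obtain ⟨h1, h2⟩ := H (Real.sqrt m) 1 hsm one_pos (t₂/m) (t₁/m) (t₁/m) (t₁/m)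
      hmem₂ hmem₁ hmem₁ hmem₁ hle hle hle (by linarith)
    rw [key m t₁ hm, key m t₂ hm] at h1 h2
    have hlt : FK K m t₁ ≤ FK K m t₂ := by linarith
    rcases eq_or_lt_of_le hlt with heq | hstrict
    · exfalso
      have := h2.1 (by linarith)
      rcases Set.pair_eq_pair_iff.1 this with ⟨e, _⟩ | ⟨e, _⟩ <;>
      · have : t₂ = t₁ := (div_left_inj' (ne_of_gt hm)).1 e
        linarith
    · exact hstrict
  -- R2 : midpoint convexity of FK K m on (0, m)
  have R2 : ∀ m t₁ t₂ : ℝ, 0 < m → 0 < t₁ → t₁ ≤ t₂ → t₂ < m →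
      2 * FK K m ((t₁ + t₂)/2) ≤ FK K m t₁ + FK K m t₂ := by
    intro m t₁ t₂ hm ht₁ ht₁₂ ht₂m
    have hsm : 0 < Real.sqrt m := Real.sqrt_pos.2 hm
    have hmem₂ := honeIoo m t₂ hm (by linarith) ht₂m
    have hmem₁ := honeIoo m t₁ hm ht₁ (by linarith)
    have hmemmid := honeIoo m ((t₁+t₂)/2) hm (by linarith) (by linarith)
    obtain ⟨h1, _⟩ := H (Real.sqrt m) 1 hsm one_pos (t₂/m) ((t₁+t₂)/2/m) ((t₁+t₂)/2/m) (t₁/m)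
      hmem₂ hmemmid hmemmid hmem₁
      (by gcongr <;> linarith) (by gcongr <;> linarith) (by gcongr <;> linarith)
      (le_of_eq (by ring))
    rw [key m t₁ hm, key m t₂ hm, key m ((t₁+t₂)/2) hm] at h1
    linarith
  -- (α)
  have alpha : ∀ m t : ℝ, 0 < m → 0 < t → t < m/2 →
      2 * FK K m t < 2 * fK K m + FK K m (2*t) := by
    intro m t hm ht htm
    have s1 := R1 (m+t) (t/2) t (by linarith) (by linarith) (by linarith) (by linarith)
    have s2 := R1 (m-t) (t/2) t (by linarith) (by linarith) (by linarith) (by linarith)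
    have s3 := R2 m (t/2) (3*t/2) hm (by linarith) (by linarith) (by linarith)
    have e : (t/2 + 3*t/2)/2 = t := by ring
    rw [e] at s3
    simp only [FK, fK] at s1 s2 s3 ⊢
    ring_nf at s1 s2 s3 ⊢
    linarith
  -- (β)
  have beta : ∀ m h : ℝ, 0 < m → 0 < h → h < m/2 →
      2 * (fK K m + fK K (2*m)) ≤ FK K m h + FK K (2*m) h := by
    intro m h hm hh hhm
    have s := R2 (3*m/2) (m/2 - h) (m/2 + h) (by linarith) (by linarith) (by linarith)
      (by linarith)
    have e : ((m/2 - h) + (m/2 + h))/2 = m/2 := by ring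
    rw [e] at s
    simp only [FK, fK] at s ⊢
    ring_nf at s ⊢
    linarith
  -- main claim : 2 fK K m ≤ FK K m s for all 0 < s < m
  have hclaim : ∀ m s : ℝ, 0 < m → 0 < s → s < m → 2 * fK K m ≤ FK K m s := by
    intro m s hm hs hsm
    set T := FK K (2*m) '' Ioo (0:ℝ) m with hT
    have hTne : T.Nonempty := ⟨FK K (2*m) (m/2), ⟨m/2, ⟨by positivity, by linarith⟩, rfl⟩⟩
    have hTbdd : BddBelow T := by
      refine ⟨0, ?_⟩
      rintro x ⟨t, htI, rfl⟩
      exact (hFpos (2*m) t htI.1 (by linarith [htI.2])).le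
    set Lm := sInf T with hLm
    have claim1 : Lm ≤ 2 * fK K (2*m) := by
      refine le_of_forall_pos_le_add (fun ε hε => ?_)
      obtain ⟨x, ⟨t₀, ht₀I, rfl⟩, hxlt⟩ := Real.lt_sInf_add_pos hTne hε
      have hα := alpha (2*m) (t₀/2) (by linarith) (by linarith [ht₀I.1])
        (by linarith [ht₀I.2])
      rw [show 2*(t₀/2) = t₀ by ring] at hα
      have hmemhalf : FK K (2*m) (t₀/2) ∈ T := ⟨t₀/2, ⟨by linarith [ht₀I.1], by linarith [ht₀I.2]⟩, rfl⟩
      have hLle : Lm ≤ FK K (2*m) (t₀/2) := csInf_le hTbdd hmemhalf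
      rw [← hLm] at hxlt
      linarith
    refine le_of_forall_pos_le_add (fun ε hε => ?_)
    obtain ⟨x, ⟨t₀, ht₀I, rfl⟩, hxlt⟩ := Real.lt_sInf_add_pos hTne (half_pos hε)
    set h := min t₀ s / 2 with hh
    have hhpos : 0 < h := by
      have := lt_min ht₀I.1 hs
      positivity
    have hht₀ : h < t₀ := by
      have := min_le_left t₀ s
      simp only [hh]
      linarith [ht₀I.1]
    have hhs : h < s := by
      have := min_le_right t₀ s
      simp only [hh]
      linarith
    have hhm2 : h < m/2 := by
      have := min_le_right t₀ s
      simp only [hh]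
      linarith
    have mono1 : FK K (2*m) h < FK K (2*m) t₀ := R1 (2*m) h t₀ (by linarith) hhpos hht₀
      (by linarith [ht₀I.2])
    have hβ := beta m h hm hhpos hhm2
    have mono2 : FK K m h < FK K m s := R1 m h s hm hhpos hhs hsm
    rw [← hLm] at hxlt
    linarith
  -- conclusion
  have main : ∀ σ₁ σ₂ : ℝ, 0 < σ₂ → σ₂ < σ₁ →
      2 * fK K ((σ₁ + σ₂)/2) < fK K σ₁ + fK K σ₂ := by
    intro σ₁ σ₂ h2 h12
    set m := (σ₁ + σ₂)/2 with hm
    set r := (σ₁ - σ₂)/2 with hr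
    have hmpos : 0 < m := by simp only [hm]; linarith
    have hrpos : 0 < r := by simp only [hr]; linarith
    have hrm : r < m := by simp only [hr, hm]; linarith
    have h1 := hclaim m (r/2) hmpos (by linarith) (by linarith)
    have h2' := R1 m (r/2) r hmpos (by linarith) (by linarith) hrm
    have e : FK K m r = fK K σ₁ + fK K σ₂ := by
      simp only [FK, fK]
      rw [show m + r = σ₁ by simp only [hm, hr]; ring, show m - r = σ₂ by simp only [hm, hr]; ring]
    linarith [e ▸ (lt_of_le_of_lt h1 h2')]
  intro τ₁ τ₂ hτ₁ hτ₂ hne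
  rcases lt_or_gt_of_ne hne with hlt | hgt
  · have := main τ₂ τ₁ hτ₁ hlt
    rw [show (τ₂ + τ₁)/2 = (τ₁ + τ₂)/2 by ring] at this
    show 2 * fK K ((τ₁ + τ₂)/2) < fK K τ₁ + fK K τ₂
    linarith
  · exact main τ₁ τ₂ hτ₂ hgt

/-- Characterization of the strict convexity of `τ ↦ K(√τ)` via a four-point inequality
for the functions `g(z) = K(c₁√(1 + c₂ z)) + K(c₁√(1 − c₂ z))`, together with the
characterization of the equality cases. -/
theorem statement_17 (K : ℝ → ℝ) (hKmeas : Measurable K)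
    (hKpos : ∀ τ : ℝ, 0 < τ → 0 < K τ) :
    (∀ τ₁ τ₂ : ℝ, 0 < τ₁ → 0 < τ₂ → τ₁ ≠ τ₂ →
        2 * K (Real.sqrt ((τ₁ + τ₂) / 2)) < K (Real.sqrt τ₁) + K (Real.sqrt τ₂))
    ↔
    (∀ c₁ c₂ : ℝ, 0 < c₁ → 0 < c₂ →
      ∀ A B C D : ℝ, A ∈ Set.Ioo 0 (1 / c₂) → B ∈ Set.Ioo 0 (1 / c₂) →
        C ∈ Set.Ioo 0 (1 / c₂) → D ∈ Set.Ioo 0 (1 / c₂) →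
        B ≤ A → C ≤ A → D ≤ A → B + C ≤ A + D →
        (gaux K c₁ c₂ B + gaux K c₁ c₂ C ≤ gaux K c₁ c₂ A + gaux K c₁ c₂ D ∧
          (gaux K c₁ c₂ A + gaux K c₁ c₂ D = gaux K c₁ c₂ B + gaux K c₁ c₂ C ↔
            ({A, D} : Set ℝ) = {B, C}))) := by
  constructor
  · -- forward direction
    intro hK c₁ c₂ hc₁ hc₂ A B C D hA hB hC hD hBA hCA hDA hsum
    set L := 1 / c₂ with hLdef
    have hL : 0 < L := by positivity
    set G := gaux K c₁ c₂ with hG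
    -- positivity of arguments
    have harg : ∀ z : ℝ, z ∈ Ioo (-L) L → 0 < 1 + c₂ * z ∧ 0 < 1 - c₂ * z := by
      intro z hz
      have h1 : c₂ * z < c₂ * L := by
        apply mul_lt_mul_of_pos_left hz.2 hc₂
      have h2 : c₂ * (-L) < c₂ * z := mul_lt_mul_of_pos_left hz.1 hc₂
      have h3 : c₂ * L = 1 := by rw [hLdef]; field_simp
      constructor
      · nlinarith
      · nlinarith
    -- rewrite G in terms of f
    have hGf : ∀ z : ℝ, G z = K (Real.sqrt (c₁^2 * (1 + c₂ * z)))
        + K (Real.sqrt (c₁^2 * (1 - c₂ * z))) := by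
      intro z
      rw [hG]
      unfold gaux
      rw [Real.sqrt_mul (by positivity) (1 + c₂ * z), Real.sqrt_mul (by positivity) (1 - c₂ * z),
        Real.sqrt_sq hc₁.le]
    -- strict midpoint convexity of G on Ioo (-L) L
    have hGmid : ∀ z₁ ∈ Ioo (-L) L, ∀ z₂ ∈ Ioo (-L) L, z₁ ≠ z₂ →
        2 * G ((z₁ + z₂) / 2) < G z₁ + G z₂ := by
      intro z₁ hz₁ z₂ hz₂ hne
      obtain ⟨hp1, hm1⟩ := harg z₁ hz₁
      obtain ⟨hp2, hm2⟩ := harg z₂ hz₂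
      have hmidI : (z₁ + z₂)/2 ∈ Ioo (-L) L :=
        ⟨by linarith [hz₁.1, hz₂.1], by linarith [hz₁.2, hz₂.2]⟩
      rw [hGf, hGf, hGf]
      have e1 : c₁^2 * (1 + c₂ * ((z₁+z₂)/2)) =
          (c₁^2 * (1 + c₂ * z₁) + c₁^2 * (1 + c₂ * z₂)) / 2 := by ring
      have e2 : c₁^2 * (1 - c₂ * ((z₁+z₂)/2)) =
          (c₁^2 * (1 - c₂ * z₁) + c₁^2 * (1 - c₂ * z₂)) / 2 := by ring
      have hplus := hK (c₁^2 * (1 + c₂ * z₁)) (c₁^2 * (1 + c₂ * z₂))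
        (by positivity) (by positivity)
        (by intro h; apply hne; have := mul_left_cancel₀ (by positivity : (c₁:ℝ)^2 ≠ 0) h
            have : c₂ * z₁ = c₂ * z₂ := by linarith
            exact mul_left_cancel₀ (ne_of_gt hc₂) this)
      have hminus := hK (c₁^2 * (1 - c₂ * z₁)) (c₁^2 * (1 - c₂ * z₂))
        (by positivity) (by positivity)
        (by intro h; apply hne; have := mul_left_cancel₀ (by positivity : (c₁:ℝ)^2 ≠ 0) h
            have : c₂ * z₁ = c₂ * z₂ := by linarith
            exact mul_left_cancel₀ (ne_of_gt hc₂) this)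
      rw [← e1] at hplus
      rw [← e2] at hminus
      linarith
    have hGmid' : ∀ z₁ ∈ Ioo (-L) L, ∀ z₂ ∈ Ioo (-L) L,
        2 * G ((z₁ + z₂) / 2) ≤ G z₁ + G z₂ := by
      intro z₁ hz₁ z₂ hz₂
      rcases eq_or_ne z₁ z₂ with rfl | hne
      · have : (z₁ + z₁)/2 = z₁ := by ring
        rw [this]; ring_nf; exact le_rfl
      · exact (hGmid z₁ hz₁ z₂ hz₂ hne).le
    have hGmeas : Measurable G := by
      rw [hG]
      unfold gaux
      apply Measurable.add
      · exact hKmeas.comp (by fun_prop)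
      · exact hKmeas.comp (by fun_prop)
    have hGconv : ConvexOn ℝ (Ioo (-L) L) G := sierpinski hGmeas hGmid'
    have hGstrict : StrictConvexOn ℝ (Ioo (-L) L) G :=
      strictConvexOn_of_convexOn_midpoint hGconv hGmid
    have hGeven : ∀ z, G (-z) = G z := by
      intro z
      rw [hG]
      unfold gaux
      rw [show 1 + c₂ * (-z) = 1 - c₂ * z by ring, show 1 - c₂ * (-z) = 1 + c₂ * z by ring,
        add_comm]
    exact fourpoint hL hGstrict hGeven hA hB hC hD hBA hCA hDA hsum
  · -- reverse direction
    intro H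
    exact reverse_dir K hKpos H
end
end

section
/- Equivalent formulations of convexity for nondecreasing functions. Let 0 < M ≤ +∞ and let h : (0, M) → ℝ be measurable and nondecreasing. The following are equivalent. (a) h is convex on (0, M). (b) For every 0 ≤ L ≤ 2M, the function h_L(x) := h(x) + h(L − x) is convex on the interval (max{L − M, 0}, min{L, M}). (c) For all A, B, C, D ∈ (0, M) with A = max{A, B, C, D} and A + D ≥ B + C, one has h(A) + h(D) ≥ h(B) + h(C). -/
open scoped ENNReal

noncomputable section

/-- The interval `(0, M)` with `M ∈ (0, +∞]`, as a subset of `ℝ`. -/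
def intervalOM (M : ℝ≥0∞) : Set ℝ := {x : ℝ | 0 < x ∧ ENNReal.ofReal x < M}

lemma convex_intervalOM (M : ℝ≥0∞) : Convex ℝ (intervalOM M) := by
  intro x hx y hy a b ha hb hab
  obtain ⟨hx1, hx2⟩ := hx
  obtain ⟨hy1, hy2⟩ := hy
  simp only [smul_eq_mul]
  rcases le_total x y with hxy | hxy
  · refine ⟨?_, lt_of_le_of_lt (ENNReal.ofReal_le_ofReal ?_) hy2⟩
    · nlinarith [mul_le_mul_of_nonneg_left hxy hb]
    · nlinarith [mul_le_mul_of_nonneg_left hxy ha]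
  · refine ⟨?_, lt_of_le_of_lt (ENNReal.ofReal_le_ofReal ?_) hx2⟩
    · nlinarith [mul_le_mul_of_nonneg_left hxy ha]
    · nlinarith [mul_le_mul_of_nonneg_left hxy hb]

lemma dyadic_ineq {S : Set ℝ} (hS : Convex ℝ S) {h : ℝ → ℝ}
    (hmid : ∀ x ∈ S, ∀ y ∈ S, h ((x + y) / 2) ≤ (h x + h y) / 2)
    {x y : ℝ} (hx : x ∈ S) (hy : y ∈ S) :
    ∀ n : ℕ, ∀ k : ℕ, k ≤ 2 ^ n →
      h (((k : ℝ) * x + ((2:ℝ) ^ n - k) * y) / 2 ^ n)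
        ≤ ((k : ℝ) * h x + ((2:ℝ) ^ n - k) * h y) / 2 ^ n := by
  intro n
  induction n with
  | zero =>
    intro k hk
    interval_cases k <;> simp
  | succ n ih =>
    intro k hk
    have hpow : 2 ^ (n + 1) = 2 ^ n * 2 := pow_succ 2 n
    set k₁ := min k (2 ^ n) with hk₁def
    set k₂ := k - k₁ with hk₂def
    have hk₁le : k₁ ≤ 2 ^ n := min_le_right _ _
    have hk₂le : k₂ ≤ 2 ^ n := by omega
    have hkk : k₁ + k₂ = k := by omega
    have hkR : (k₁ : ℝ) + (k₂ : ℝ) = (k : ℝ) := by exact_mod_cast congrArg (Nat.cast (R := ℝ)) hkk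
    have hmem : ∀ j : ℕ, j ≤ 2 ^ n → ((j : ℝ) * x + ((2:ℝ) ^ n - j) * y) / 2 ^ n ∈ S := by
      intro j hj
      have hj' : (j : ℝ) ≤ (2:ℝ) ^ n := by exact_mod_cast hj
      have h2 : (0:ℝ) < 2 ^ n := by positivity
      have heq : ((j : ℝ) * x + ((2:ℝ) ^ n - j) * y) / 2 ^ n
          = ((j : ℝ) / 2 ^ n) • x + (((2:ℝ) ^ n - j) / 2 ^ n) • y := by
        simp only [smul_eq_mul]; ring
      rw [heq]
      exact hS hx hy (by positivity) (div_nonneg (by linarith) h2.le) (by field_simp; ring)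
    have e1 := ih k₁ hk₁le
    have e2 := ih k₂ hk₂le
    have m1 := hmem k₁ hk₁le
    have m2 := hmem k₂ hk₂le
    have hmid' := hmid _ m1 _ m2
    rw [← hkR]
    have heq2 : (((k₁:ℝ) + k₂) * x + ((2:ℝ) ^ (n+1) - ((k₁:ℝ) + k₂)) * y) / 2 ^ (n+1)
        = ((((k₁:ℝ) * x + ((2:ℝ) ^ n - k₁) * y) / 2 ^ n)
            + (((k₂:ℝ) * x + ((2:ℝ) ^ n - k₂) * y) / 2 ^ n)) / 2 := by
      have h2 : (0:ℝ) < 2 ^ n := by positivity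
      field_simp
      ring
    have heq3 : (((k₁:ℝ) + k₂) * h x + ((2:ℝ) ^ (n+1) - ((k₁:ℝ) + k₂)) * h y) / 2 ^ (n+1)
        = ((((k₁:ℝ) * h x + ((2:ℝ) ^ n - k₁) * h y) / 2 ^ n)
            + (((k₂:ℝ) * h x + ((2:ℝ) ^ n - k₂) * h y) / 2 ^ n)) / 2 := by
      have h2 : (0:ℝ) < 2 ^ n := by positivity
      field_simp
      ring
    rw [heq2, heq3]
    have := hmid'
    linarith

lemma convexOn_of_midpoint {S : Set ℝ} (hS : Convex ℝ S) {h : ℝ → ℝ}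
    (hmono : ∀ x ∈ S, ∀ y ∈ S, x ≤ y → h x ≤ h y)
    (hmid : ∀ x ∈ S, ∀ y ∈ S, h ((x + y) / 2) ≤ (h x + h y) / 2) :
    ConvexOn ℝ S h := by
  have key : ∀ x ∈ S, ∀ y ∈ S, x ≤ y → ∀ a : ℝ, 0 ≤ a → a ≤ 1 →
      h (a * x + (1 - a) * y) ≤ a * h x + (1 - a) * h y := by
    intro x hx y hy hxy a ha ha1
    have hzmem : ∀ t : ℝ, 0 ≤ t → t ≤ 1 → t * x + (1 - t) * y ∈ S := by
      intro t ht ht1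
      have := hS hx hy (a := t) (b := 1 - t) ht (by linarith) (by ring)
      simpa [smul_eq_mul] using this
    have hzS : a * x + (1 - a) * y ∈ S := hzmem a ha ha1
    have main : ∀ n : ℕ, h (a * x + (1 - a) * y)
        ≤ (⌊a * 2 ^ n⌋₊ : ℝ) / 2 ^ n * h x + (1 - (⌊a * 2 ^ n⌋₊ : ℝ) / 2 ^ n) * h y := by
      intro n
      set k := ⌊a * 2 ^ n⌋₊ with hkdef
      have h2 : (0:ℝ) < 2 ^ n := by positivity
      have hkle : (k : ℝ) ≤ a * 2 ^ n := Nat.floor_le (by positivity)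
      have hk2 : k ≤ 2 ^ n := by
        have h1 : (k:ℝ) ≤ (2:ℝ)^n := le_trans hkle (by nlinarith)
        exact_mod_cast h1
      set t := (k : ℝ) / 2 ^ n with htdef
      have ht0 : (0:ℝ) ≤ t := by positivity
      have hta : t ≤ a := by rw [htdef, div_le_iff₀ h2]; exact hkle
      have ht1 : t ≤ 1 := le_trans hta ha1
      have hw : t * x + (1 - t) * y ∈ S := hzmem t ht0 ht1
      have hprod : 0 ≤ (a - t) * (y - x) := mul_nonneg (by linarith) (by linarith)
      have hzw : a * x + (1 - a) * y ≤ t * x + (1 - t) * y := by nlinarith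
      have hstep := hmono _ hzS _ hw hzw
      have hdy := dyadic_ineq hS hmid hx hy n k hk2
      have eL : ((k:ℝ) * x + ((2:ℝ) ^ n - k) * y) / 2 ^ n = t * x + (1 - t) * y := by
        rw [htdef]; field_simp; try ring
      have eR : ((k:ℝ) * h x + ((2:ℝ) ^ n - k) * h y) / 2 ^ n = t * h x + (1 - t) * h y := by
        rw [htdef]; field_simp; try ring
      rw [eL, eR] at hdy
      exact le_trans hstep hdy
    have htend : Filter.Tendsto (fun n : ℕ => (⌊a * 2 ^ n⌋₊ : ℝ) / 2 ^ n)
        Filter.atTop (nhds a) := by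
      have hup : ∀ n : ℕ, (⌊a * 2 ^ n⌋₊ : ℝ) / 2 ^ n ≤ a := by
        intro n
        have h2 : (0:ℝ) < 2 ^ n := by positivity
        rw [div_le_iff₀ h2]; exact Nat.floor_le (by positivity)
      have hlow : ∀ n : ℕ, a - (1/2:ℝ) ^ n ≤ (⌊a * 2 ^ n⌋₊ : ℝ) / 2 ^ n := by
        intro n
        have h2 : (0:ℝ) < 2 ^ n := by positivity
        have hklt : a * 2 ^ n < ⌊a * 2 ^ n⌋₊ + 1 := Nat.lt_floor_add_one _
        rw [le_div_iff₀ h2]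
        have hone : (1/2:ℝ) ^ n * 2 ^ n = 1 := by
          rw [← mul_pow]; norm_num
        nlinarith
      have t1 : Filter.Tendsto (fun n : ℕ => a - (1/2:ℝ) ^ n) Filter.atTop (nhds a) := by
        have := tendsto_pow_atTop_nhds_zero_of_lt_one (by norm_num : (0:ℝ) ≤ 1/2)
          (by norm_num : (1/2:ℝ) < 1)
        simpa using Filter.Tendsto.const_sub a this
      exact tendsto_of_tendsto_of_tendsto_of_le_of_le t1 tendsto_const_nhds hlow hup
    have htend2 : Filter.Tendsto
        (fun n : ℕ => (⌊a * 2 ^ n⌋₊ : ℝ) / 2 ^ n * h x + (1 - (⌊a * 2 ^ n⌋₊ : ℝ) / 2 ^ n) * h y)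
        Filter.atTop (nhds (a * h x + (1 - a) * h y)) :=
      (htend.mul_const _).add ((tendsto_const_nhds.sub htend).mul_const _)
    exact ge_of_tendsto' htend2 main
  refine ⟨hS, ?_⟩
  intro x hx y hy a b ha hb hab
  simp only [smul_eq_mul]
  have hb' : b = 1 - a := by linarith
  subst hb'
  have ha1 : a ≤ 1 := by linarith
  rcases le_total x y with hxy | hxy
  · exact key x hx y hy hxy a ha ha1
  · have hkey := key y hy x hx hxy (1 - a) (by linarith) (by linarith)
    have e : (1 - a) * y + (1 - (1 - a)) * x = a * x + (1 - a) * y := by ring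
    rw [e] at hkey
    linarith
lemma fourpoint_aux {M : ℝ≥0∞} {h : ℝ → ℝ}
    (hmono : ∀ x ∈ intervalOM M, ∀ y ∈ intervalOM M, x ≤ y → h x ≤ h y)
    {S_L : Set ℝ} {L A B C D x₀ : ℝ}
    (hL : L = B + C) (hconvL : ConvexOn ℝ S_L (fun x => h x + h (L - x)))
    (hBm : B ∈ S_L) (hx₀m : x₀ ∈ S_L) (hLx₀m : L - x₀ ∈ S_L)
    (hA : A ∈ intervalOM M) (hD : D ∈ intervalOM M)
    (hx₀A : x₀ ≤ A) (hx₀D : L - x₀ ≤ D)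
    (hx₀0 : 0 < x₀) (hx₀L : x₀ < L) (hhalf : L - x₀ ≤ x₀)
    (hBx₀ : B ≤ x₀) (hCx₀ : C ≤ x₀) :
    h B + h C ≤ h A + h D := by
  have hseg : B ∈ segment ℝ (L - x₀) x₀ := by
    rw [segment_eq_Icc hhalf]
    exact ⟨by linarith, hBx₀⟩
  have hmax := hconvL.le_on_segment hLx₀m hx₀m hseg
  have e1 : L - B = C := by linarith
  have e2 : L - (L - x₀) = x₀ := by ring
  rw [e1, e2] at hmax
  have hmax' : h B + h C ≤ h x₀ + h (L - x₀) := by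
    rcases max_cases (h (L - x₀) + h x₀) (h x₀ + h (L - x₀)) with ⟨he, _⟩ | ⟨he, _⟩ <;>
      rw [he] at hmax <;> linarith
  have hx₀S : x₀ ∈ intervalOM M :=
    ⟨hx₀0, lt_of_le_of_lt (ENNReal.ofReal_le_ofReal hx₀A) hA.2⟩
  have hLx₀S : L - x₀ ∈ intervalOM M :=
    ⟨by linarith, lt_of_le_of_lt (ENNReal.ofReal_le_ofReal hx₀D) hD.2⟩
  have m1 := hmono x₀ hx₀S A hA hx₀A
  have m2 := hmono (L - x₀) hLx₀S D hD hx₀D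
  linarith


/-- Equivalent formulations of convexity for nondecreasing functions `h : (0, M) → ℝ`:
(a) `h` is convex; (b) for every `0 ≤ L ≤ 2M`, `h_L(x) = h(x) + h(L - x)` is convex on
`(max{L - M, 0}, min{L, M})`; (c) the four-point inequality
`h(A) + h(D) ≥ h(B) + h(C)` holds whenever `A = max{A,B,C,D}` and `A + D ≥ B + C`. -/
theorem statement_18 (M : ℝ≥0∞) (hM : 0 < M) (h : ℝ → ℝ)
    (hmeas : Measurable h)
    (hmono : ∀ x ∈ intervalOM M, ∀ y ∈ intervalOM M, x ≤ y → h x ≤ h y) :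
    ((ConvexOn ℝ (intervalOM M) h) ↔
      (∀ L : ℝ, 0 ≤ L → ENNReal.ofReal L ≤ 2 * M →
        ConvexOn ℝ
          {x : ℝ | (if M = ⊤ then 0 else max (L - M.toReal) 0) < x ∧
            x < (if M = ⊤ then L else min L M.toReal)}
          (fun x => h x + h (L - x)))) ∧
    ((ConvexOn ℝ (intervalOM M) h) ↔
      (∀ A B C D : ℝ, A ∈ intervalOM M → B ∈ intervalOM M → C ∈ intervalOM M →
        D ∈ intervalOM M → B ≤ A → C ≤ A → D ≤ A → B + C ≤ A + D →
        h B + h C ≤ h A + h D)) := by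
  have hmemlt : ∀ {x : ℝ}, M ≠ ⊤ → x ∈ intervalOM M → x < M.toReal := by
    intro x hMt hx
    exact (ENNReal.ofReal_lt_iff_lt_toReal hx.1.le hMt).mp hx.2
  have hmem' : ∀ {x : ℝ}, M ≠ ⊤ → 0 < x → x < M.toReal → x ∈ intervalOM M := by
    intro x hMt hx0 hxM
    exact ⟨hx0, (ENNReal.ofReal_lt_iff_lt_toReal hx0.le hMt).mpr hxM⟩
  -- (a) → (b)
  have hab : ConvexOn ℝ (intervalOM M) h → ∀ L : ℝ, 0 ≤ L → ENNReal.ofReal L ≤ 2 * M →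
      ConvexOn ℝ
        {x : ℝ | (if M = ⊤ then 0 else max (L - M.toReal) 0) < x ∧
          x < (if M = ⊤ then L else min L M.toReal)}
        (fun x => h x + h (L - x)) := by
    intro hc L hL0 hL2
    have hsub : ∀ z ∈ ({x : ℝ | (if M = ⊤ then 0 else max (L - M.toReal) 0) < x ∧
        x < (if M = ⊤ then L else min L M.toReal)} : Set ℝ),
        z ∈ intervalOM M ∧ L - z ∈ intervalOM M := by
      intro z hz
      obtain ⟨hz1, hz2⟩ := hz
      by_cases hMt : M = ⊤
      · rw [if_pos hMt] at hz1
        rw [if_pos hMt] at hz2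
        subst hMt
        exact ⟨⟨hz1, ENNReal.ofReal_lt_top⟩, ⟨by linarith, ENNReal.ofReal_lt_top⟩⟩
      · rw [if_neg hMt] at hz1
        rw [if_neg hMt] at hz2
        rw [max_lt_iff] at hz1
        rw [lt_min_iff] at hz2
        exact ⟨hmem' hMt hz1.2 hz2.2, hmem' hMt (by linarith [hz2.1]) (by linarith [hz1.1])⟩
    constructor
    · exact convex_Ioo _ _
    · intro p hp q hq a b ha hb hab'
      obtain ⟨hp1, hp2⟩ := hsub p hp
      obtain ⟨hq1, hq2⟩ := hsub q hq
      simp only [smul_eq_mul]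
      have e1 := hc.2 hp1 hq1 ha hb hab'
      have e2 := hc.2 hp2 hq2 ha hb hab'
      simp only [smul_eq_mul] at e1 e2
      have e3 : L - (a * p + b * q) = a * (L - p) + b * (L - q) := by
        linear_combination L * hab'.symm
      rw [e3]
      linarith
  -- (b) → (c)
  have hbc : (∀ L : ℝ, 0 ≤ L → ENNReal.ofReal L ≤ 2 * M →
      ConvexOn ℝ
        {x : ℝ | (if M = ⊤ then 0 else max (L - M.toReal) 0) < x ∧
          x < (if M = ⊤ then L else min L M.toReal)}
        (fun x => h x + h (L - x))) →
      ∀ A B C D : ℝ, A ∈ intervalOM M → B ∈ intervalOM M → C ∈ intervalOM M →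
        D ∈ intervalOM M → B ≤ A → C ≤ A → D ≤ A → B + C ≤ A + D →
        h B + h C ≤ h A + h D := by
    intro hb A B C D hA hB hC hD hBA hCA hDA hsum
    set L := B + C with hLdef
    have hL0 : 0 ≤ L := by have := hB.1; have := hC.1; linarith
    have hL2 : ENNReal.ofReal L ≤ 2 * M := by
      calc ENNReal.ofReal (B + C) ≤ ENNReal.ofReal B + ENNReal.ofReal C :=
            ENNReal.ofReal_add_le
        _ ≤ M + M := add_le_add hB.2.le hC.2.le
        _ = 2 * M := (two_mul M).symm
    have hconvL := hb L hL0 hL2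
    set x₀ := max (max B C) (L - D) with hx₀def
    have hB0 := hB.1
    have hC0 := hC.1
    have hD0 := hD.1
    have hA0 := hA.1
    have hBx₀ : B ≤ x₀ := le_trans (le_max_left _ _) (le_max_left _ _)
    have hCx₀ : C ≤ x₀ := le_trans (le_max_right _ _) (le_max_left _ _)
    have hDx₀ : L - D ≤ x₀ := le_max_right _ _
    have hx₀A : x₀ ≤ A := max_le (max_le hBA hCA) (by linarith)
    have hx₀L : x₀ < L := max_lt (max_lt (by linarith) (by linarith)) (by linarith)
    have hx₀0 : 0 < x₀ := lt_of_lt_of_le hB0 hBx₀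
    have hhalf : L - x₀ ≤ x₀ := by linarith
    by_cases hMt : M = ⊤
    · simp only [if_pos hMt] at hconvL
      refine fourpoint_aux hmono hLdef hconvL ?_ ?_ ?_ hA hD hx₀A (by linarith) hx₀0 hx₀L
        hhalf hBx₀ hCx₀
      · exact ⟨hB0, by linarith⟩
      · exact ⟨hx₀0, hx₀L⟩
      · exact ⟨by linarith, by linarith⟩
    · simp only [if_neg hMt] at hconvL
      have hBr := hmemlt hMt hB
      have hCr := hmemlt hMt hC
      have hAr := hmemlt hMt hA
      have hx₀r : x₀ < M.toReal := max_lt (max_lt hBr hCr) (by linarith)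
      refine fourpoint_aux hmono hLdef hconvL ?_ ?_ ?_ hA hD hx₀A (by linarith) hx₀0 hx₀L
        hhalf hBx₀ hCx₀
      · exact ⟨max_lt (by linarith) hB0, lt_min (by linarith) hBr⟩
      · exact ⟨max_lt (by linarith) hx₀0, lt_min hx₀L hx₀r⟩
      · exact ⟨max_lt (by linarith) (by linarith), lt_min (by linarith) (by linarith)⟩
  -- (c) → (a)
  have hca : (∀ A B C D : ℝ, A ∈ intervalOM M → B ∈ intervalOM M → C ∈ intervalOM M →
      D ∈ intervalOM M → B ≤ A → C ≤ A → D ≤ A → B + C ≤ A + D →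
      h B + h C ≤ h A + h D) → ConvexOn ℝ (intervalOM M) h := by
    intro hc
    apply convexOn_of_midpoint (convex_intervalOM M) hmono
    intro x hx y hy
    rcases le_total x y with hxy | hxy
    · have hm : (x + y) / 2 ∈ intervalOM M :=
        ⟨by linarith [hx.1, hy.1],
          lt_of_le_of_lt (ENNReal.ofReal_le_ofReal (by linarith)) hy.2⟩
      have := hc y ((x+y)/2) ((x+y)/2) x hy hm hm hx (by linarith) (by linarith) hxy
        (by linarith)
      linarith
    · have hm : (x + y) / 2 ∈ intervalOM M :=
        ⟨by linarith [hx.1, hy.1],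
          lt_of_le_of_lt (ENNReal.ofReal_le_ofReal (by linarith)) hx.2⟩
      have := hc x ((x+y)/2) ((x+y)/2) y hx hm hm hy (by linarith) (by linarith) hxy
        (by linarith)
      linarith
  exact ⟨⟨hab, fun hb => hca (hbc hb)⟩, ⟨fun ha' => hbc (hab ha'), hca⟩⟩
end
end

section
/- Four-point inequalities for bilinear combinations. Let α, β ∈ ℝ with α ≥ |β|, and let a, b, p, q ∈ ℝ with a > b ≥ 0 and p > q ≥ 0. Define A := a p α + b q β, B := a q α + b p β, C := b p α + a q β, D := b q α + a p β. Then: (1) |A| ≥ |B|, |A| ≥ |C|, |A| ≥ |D|, and |A| + |D| ≥ |B| + |C|. (2) If the unordered pairs {|A|, |D|} and {|B|, |C|} coincide, then necessarily α = β = 0. -/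
set_option maxHeartbeats 1000000


/-- Four-point inequalities for the bilinear combinations
`A = apα + bqβ`, `B = aqα + bpβ`, `C = bpα + aqβ`, `D = bqα + apβ`,
where `α ≥ |β|`, `a > b ≥ 0` and `p > q ≥ 0` (corresponding to
`(a,b,p,q) = (|x'|, |x''|, |y'|, |y''|)` with `x, y ∈ 𝒪`). -/
theorem statement_19 (α β a b p q : ℝ) (hαβ : |β| ≤ α)
    (hb : 0 ≤ b) (hab : b < a) (hq : 0 ≤ q) (hpq : q < p) :
    (|a * q * α + b * p * β| ≤ |a * p * α + b * q * β| ∧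
     |b * p * α + a * q * β| ≤ |a * p * α + b * q * β| ∧
     |b * q * α + a * p * β| ≤ |a * p * α + b * q * β| ∧
     |a * q * α + b * p * β| + |b * p * α + a * q * β|
        ≤ |a * p * α + b * q * β| + |b * q * α + a * p * β|) ∧
    (({|a * p * α + b * q * β|, |b * q * α + a * p * β|} : Set ℝ)
        = {|a * q * α + b * p * β|, |b * p * α + a * q * β|} →
      α = 0 ∧ β = 0) := by
  obtain ⟨hβl, hβr⟩ := abs_le.mp hαβ
  have hα : 0 ≤ α := (abs_nonneg β).trans hαβ
  have ha : 0 < a := lt_of_le_of_lt hb hab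
  have hp : 0 < p := lt_of_le_of_lt hq hpq
  set A := a * p * α + b * q * β with hA_def
  set B := a * q * α + b * p * β with hB_def
  set C := b * p * α + a * q * β with hC_def
  set D := b * q * α + a * p * β with hD_def
  have h5 : 0 ≤ α - β := by linarith
  have h6 : 0 ≤ α + β := by linarith
  have habn : 0 ≤ a - b := by linarith
  have hpqn : 0 ≤ p - q := by linarith
  have hAB1 : B ≤ A := by
    linarith [mul_nonneg (mul_nonneg hpqn hb) h5,
      mul_nonneg (mul_nonneg hpqn habn) hα]
  have hAB2 : -A ≤ B := by
    linarith [mul_nonneg (mul_nonneg (by linarith : (0:ℝ) ≤ p + q) hb) h6,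
      mul_nonneg (mul_nonneg (by linarith : (0:ℝ) ≤ p + q) habn) hα]
  have hAC1 : C ≤ A := by
    linarith [mul_nonneg (mul_nonneg habn hq) h5,
      mul_nonneg (mul_nonneg habn hpqn) hα]
  have hAC2 : -A ≤ C := by
    linarith [mul_nonneg (mul_nonneg (by linarith : (0:ℝ) ≤ a + b) hq) h6,
      mul_nonneg (mul_nonneg (by linarith : (0:ℝ) ≤ a + b) hpqn) hα]
  have hAD1 : D ≤ A := by
    linarith [mul_nonneg (mul_nonneg habn hp.le) h5,
      mul_nonneg (mul_nonneg hb hpqn) h5]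
  have hAD2 : -A ≤ D := by
    linarith [mul_nonneg (mul_nonneg ha.le hp.le) h6,
      mul_nonneg (mul_nonneg hb hq) h6]
  have hA0 : 0 ≤ A := by linarith
  have habsA : |A| = A := abs_of_nonneg hA0
  have hBC1 : B + C ≤ A + D := by
    linarith [mul_nonneg (mul_nonneg habn hpqn) h6]
  have hBC2 : B - C ≤ A - D := by
    linarith [mul_nonneg (mul_nonneg (by linarith : (0:ℝ) ≤ a + b) hpqn) h5]
  have hBC3 : C - B ≤ A - D := by
    linarith [mul_nonneg (mul_nonneg habn (by linarith : (0:ℝ) ≤ p + q)) h5]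
  have hBCpos : 0 ≤ B + C := by
    linarith [mul_nonneg (mul_nonneg ha.le hq) h6,
      mul_nonneg (mul_nonneg hb hp.le) h6]
  refine ⟨⟨abs_le_abs hAB1 (by linarith), abs_le_abs hAC1 (by linarith), abs_le_abs hAD1 (by linarith), ?_⟩, ?_⟩
  · rw [habsA]
    rcases le_or_gt 0 B with hB | hB <;> rcases le_or_gt 0 C with hC | hC
    · rw [abs_of_nonneg hB, abs_of_nonneg hC]; linarith [le_abs_self D]
    · rw [abs_of_nonneg hB, abs_of_neg hC]; linarith [neg_le_abs D]
    · rw [abs_of_neg hB, abs_of_nonneg hC]; linarith [neg_le_abs D]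
    · exfalso; linarith
  · intro hset
    have hmemA : A = |B| ∨ A = |C| := by
      have h1 : |A| ∈ ({|B|, |C|} : Set ℝ) := hset ▸ Set.mem_insert _ _
      rw [habsA] at h1; simpa using h1
    have hα0 : α = 0 := by
      refine le_antisymm ?_ hα
      rcases hmemA with h | h
      · rcases abs_cases B with ⟨hB, _⟩ | ⟨hB, _⟩ <;> rw [hB] at h
        · nlinarith [mul_nonneg (mul_nonneg hpqn hb) h5,
            mul_pos (sub_pos.2 hpq) (sub_pos.2 hab)]
        · nlinarith [mul_nonneg (mul_nonneg (by linarith : (0:ℝ) ≤ p + q) hb) h6,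
            mul_pos (by linarith : (0:ℝ) < p + q) (sub_pos.2 hab)]
      · rcases abs_cases C with ⟨hC, _⟩ | ⟨hC, _⟩ <;> rw [hC] at h
        · nlinarith [mul_nonneg (mul_nonneg habn hq) h5,
            mul_pos (sub_pos.2 hab) (sub_pos.2 hpq)]
        · nlinarith [mul_nonneg (mul_nonneg (by linarith : (0:ℝ) ≤ a + b) hq) h6,
            mul_pos (by linarith : (0:ℝ) < a + b) (sub_pos.2 hpq)]
    refine ⟨hα0, ?_⟩
    rw [hα0] at hαβ
    exact abs_nonpos_iff.mp hαβ
end
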